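/- arXiv:0806.3249 — 5 statements merged into one kernel-verified Lean document; each statement's English description precedes it below -/
import Mathlib

section
/- Let G = (V,E) be a finite simple graph with n vertices and c connected components, and let v : E → ℝ satisfy −2 ≤ v_e ≤ 0 for every edge e. Then C_G^{[k]}(v) = 0 for 1 ≤ k < c, (−1)^{n−k} C_G^{[k]}(v) ≥ 0 for c ≤ k ≤ n, and C_G^{[n]}(v) = 1. Moreover, if −2 < v_e < 0 for every edge e, then (−1)^{n−k} C_G^{[k]}(v) > 0 for all c ≤ k ≤ n. -/
open Finset

noncomputable def numCompOfEdges {V : Type*} [Fintype V] (A : Finset (Sym2 V)) : ℕ :=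
  Nat.card (SimpleGraph.fromEdgeSet (A : Set (Sym2 V))).ConnectedComponent

namespace TutteAux

set_option linter.unusedSectionVars false

lemma nat_card_option {α : Type*} [Finite α] : Nat.card (Option α) = Nat.card α + 1 :=
  Finite.card_option

def liftAdj {W : Type*} (G : SimpleGraph W) {β : Sort*} (f : W → β)
    (h : ∀ a b, G.Adj a b → f a = f b) : G.ConnectedComponent → β :=
  SimpleGraph.ConnectedComponent.lift f (fun v w p hp => by
    clear hp
    induction p with
    | nil => rfl
    | cons hadj _ ih => exact (h _ _ hadj).trans ih)

@[simp] lemma liftAdj_mk {W : Type*} (G : SimpleGraph W) {β : Sort*} (f : W → β)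
    (h : ∀ a b, G.Adj a b → f a = f b) (z : W) :
    liftAdj G f h (G.connectedComponentMk z) = f z := rfl

variable {V : Type*} [Fintype V] [DecidableEq V]

lemma numComp_mono (A B : Finset (Sym2 V)) (hAB : A ⊆ B) :
    numCompOfEdges B ≤ numCompOfEdges A := by
  have hle : SimpleGraph.fromEdgeSet (A : Set (Sym2 V)) ≤
      SimpleGraph.fromEdgeSet (B : Set (Sym2 V)) :=
    SimpleGraph.fromEdgeSet_mono (by exact_mod_cast hAB)
  have hsurj : Function.Surjective
      (SimpleGraph.ConnectedComponent.map (SimpleGraph.Hom.ofLE hle)) := by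
    intro c
    refine c.ind (fun z => ⟨SimpleGraph.connectedComponentMk _ z, rfl⟩)
  exact Nat.card_le_card_of_surjective _ hsurj

lemma numComp_le_card (A : Finset (Sym2 V)) : numCompOfEdges A ≤ Fintype.card V := by
  have hsurj : Function.Surjective
      (SimpleGraph.fromEdgeSet (A : Set (Sym2 V))).connectedComponentMk :=
    fun c => c.ind (fun z => ⟨z, rfl⟩)
  have := Nat.card_le_card_of_injective _ (Function.injective_surjInv hsurj)
  rw [numCompOfEdges, ← Nat.card_eq_fintype_card]
  exact this

lemma numComp_empty : numCompOfEdges (∅ : Finset (Sym2 V)) = Fintype.card V := by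
  have : (SimpleGraph.fromEdgeSet ((∅ : Finset (Sym2 V)) : Set (Sym2 V))) = ⊥ := by
    simp
  rw [numCompOfEdges, this]
  have hinj : Function.Injective ((⊥ : SimpleGraph V).connectedComponentMk) := by
    intro a b hab
    have := SimpleGraph.ConnectedComponent.exact hab
    simpa using this
  have hsurj : Function.Surjective ((⊥ : SimpleGraph V).connectedComponentMk) :=
    fun c => c.ind (fun z => ⟨z, rfl⟩)
  rw [← Nat.card_eq_fintype_card]
  exact (Nat.card_eq_of_bijective _ ⟨hinj, hsurj⟩).symm

lemma numComp_lt_card (A : Finset (Sym2 V)) (x y : V) (hxy : x ≠ y) (hmem : s(x,y) ∈ A) :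
    numCompOfEdges A < Fintype.card V := by
  rw [numCompOfEdges]
  set G := SimpleGraph.fromEdgeSet (A : Set (Sym2 V)) with hG
  have hadj : G.Adj x y := by
    rw [hG, SimpleGraph.fromEdgeSet_adj]
    exact ⟨by exact_mod_cast hmem, hxy⟩
  have hsurj : Function.Surjective G.connectedComponentMk := fun c => c.ind (fun z => ⟨z, rfl⟩)
  set s := Function.surjInv hsurj with hs
  have hsec : ∀ c, G.connectedComponentMk (s c) = c := fun c => Function.surjInv_eq hsurj c
  set g : G.ConnectedComponent → V := fun c => if s c = y then x else s c with hg
  have hginj : Function.Injective g := by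
    intro c1 c2 h12
    rw [hg] at h12
    simp only at h12
    by_cases h1 : s c1 = y <;> by_cases h2 : s c2 = y
    · rw [← hsec c1, ← hsec c2, h1, h2]
    · rw [if_pos h1, if_neg h2] at h12
      rw [← hsec c1, ← hsec c2, h1, ← h12]
      exact (SimpleGraph.ConnectedComponent.connectedComponentMk_eq_of_adj hadj).symm
    · rw [if_neg h1, if_pos h2] at h12
      rw [← hsec c1, ← hsec c2, h2, h12]
      exact SimpleGraph.ConnectedComponent.connectedComponentMk_eq_of_adj hadj
    · rw [if_neg h1, if_neg h2] at h12
      rw [← hsec c1, ← hsec c2, h12]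
  have hy : y ∉ Set.range g := by
    rintro ⟨c, hc⟩
    rw [hg] at hc
    simp only at hc
    by_cases h1 : s c = y
    · rw [if_pos h1] at hc; exact hxy hc
    · rw [if_neg h1] at hc; exact h1 hc
  have : Fintype G.ConnectedComponent := Fintype.ofFinite _
  rw [Nat.card_eq_fintype_card]
  exact Fintype.card_lt_of_injective_of_notMem g hginj hy

lemma numComp_image_contract (x y : V) (hxy : x ≠ y) (A : Finset (Sym2 V)) :
    numCompOfEdges (A.image (Sym2.map (fun z => if z = y then x else z)))
      = numCompOfEdges (insert s(x,y) A) + 1 := by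
  set r : V → V := fun z => if z = y then x else z with hr
  set φ : Sym2 V → Sym2 V := Sym2.map r with hφ
  set G := SimpleGraph.fromEdgeSet ((insert s(x,y) A : Finset (Sym2 V)) : Set (Sym2 V)) with hG
  set H := SimpleGraph.fromEdgeSet ((A.image φ : Finset (Sym2 V)) : Set (Sym2 V)) with hH
  have hrx : r x = x := by rw [hr]; simp [hxy]
  have hry : r y = x := by rw [hr]; simp
  have hrne : ∀ z, r z ≠ y := by
    intro z
    rw [hr]; dsimp only
    split
    · exact hxy
    · assumption
  have hadjxy : G.Adj x y := by
    rw [hG, SimpleGraph.fromEdgeSet_adj]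
    exact ⟨by simp, hxy⟩
  have hreach : ∀ z, G.Reachable z (r z) := by
    intro z
    by_cases hz : z = y
    · subst hz; rw [hry]; exact hadjxy.symm.reachable
    · rw [hr]; simp only [if_neg hz]; exact SimpleGraph.Reachable.refl z
  -- y is isolated in H
  have hiso : ∀ b, ¬ H.Adj y b := by
    intro b hb
    rw [hH, SimpleGraph.fromEdgeSet_adj] at hb
    obtain ⟨hmem, hne⟩ := hb
    rw [Finset.mem_coe, Finset.mem_image] at hmem
    obtain ⟨f, _, hf⟩ := hmem
    have hy : y ∈ φ f := by rw [hf]; simp [Sym2.mem_iff]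
    rw [hφ, Sym2.mem_map] at hy
    obtain ⟨z, _, hz⟩ := hy
    exact hrne z hz
  -- adjacency in H yields reachability in G
  have hHG : ∀ a b, H.Adj a b → G.Reachable a b := by
    intro a b hab
    rw [hH, SimpleGraph.fromEdgeSet_adj] at hab
    obtain ⟨hmem, hne⟩ := hab
    rw [Finset.mem_coe, Finset.mem_image] at hmem
    obtain ⟨f, hfA, hf⟩ := hmem
    induction f with
    | _ u v =>
      rw [hφ, Sym2.map_pair_eq, Sym2.eq_iff] at hf
      have huv : u ≠ v := by
        rintro rfl
        rcases hf with ⟨h1, h2⟩ | ⟨h1, h2⟩ <;> exact hne (h1 ▸ h2 ▸ rfl)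
      have hadjuv : G.Adj u v := by
        rw [hG, SimpleGraph.fromEdgeSet_adj]
        exact ⟨by simp [hfA], huv⟩
      have key : G.Reachable (r u) (r v) :=
        ((hreach u).symm.trans hadjuv.reachable).trans (hreach v)
      rcases hf with ⟨h1, h2⟩ | ⟨h1, h2⟩
      · rw [← h1, ← h2]; exact key
      · rw [← h1, ← h2]; exact key.symm
  -- adjacency in G yields reachability of r-images in H
  have hGH : ∀ a b, G.Adj a b → H.connectedComponentMk (r a) = H.connectedComponentMk (r b) := by
    intro a b hab
    rw [hG, SimpleGraph.fromEdgeSet_adj] at hab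
    obtain ⟨hmem, hne⟩ := hab
    rw [Finset.mem_coe, Finset.mem_insert] at hmem
    rcases hmem with hmem | hmem
    · rw [Sym2.eq_iff] at hmem
      rcases hmem with ⟨rfl, rfl⟩ | ⟨rfl, rfl⟩ <;> rw [hrx, hry]
    · by_cases hrab : r a = r b
      · rw [hrab]
      · have : H.Adj (r a) (r b) := by
          rw [hH, SimpleGraph.fromEdgeSet_adj]
          constructor
          · rw [Finset.mem_coe, Finset.mem_image]
            exact ⟨s(a,b), hmem, by rw [hφ, Sym2.map_pair_eq]⟩
          · exact hrab
        exact SimpleGraph.ConnectedComponent.connectedComponentMk_eq_of_adj this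
  have hb : ∀ a b, H.Adj a b →
      (if a = y then (none : Option G.ConnectedComponent) else some (G.connectedComponentMk a)) =
      (if b = y then none else some (G.connectedComponentMk b)) := by
    intro a b hab
    have ha' : a ≠ y := fun h => hiso b (h ▸ hab)
    have hb' : b ≠ y := fun h => hiso a (h ▸ hab.symm)
    rw [if_neg ha', if_neg hb']
    exact congrArg some (SimpleGraph.ConnectedComponent.sound (hHG a b hab))
  have hGH' : ∀ a b, G.Adj a b →
      H.connectedComponentMk (r a) = H.connectedComponentMk (r b) := hGH
  set Fw : H.ConnectedComponent → Option G.ConnectedComponent :=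
    liftAdj H (fun z => if z = y then none else some (G.connectedComponentMk z)) hb with hFw
  set Bw : Option G.ConnectedComponent → H.ConnectedComponent :=
    fun o => o.elim (H.connectedComponentMk y)
      (liftAdj G (fun z => H.connectedComponentMk (r z)) hGH') with hBw
  have hleft : Function.LeftInverse Bw Fw := by
    intro c
    refine c.ind ?_
    intro z
    by_cases hz : z = y
    · subst hz
      rw [hFw, liftAdj_mk, if_pos rfl, hBw]
      rfl
    · rw [hFw, liftAdj_mk, if_neg hz, hBw]
      simp only [Option.elim_some, liftAdj_mk]
      have : r z = z := by rw [hr]; simp [hz]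
      rw [this]
  have hright : Function.RightInverse Bw Fw := by
    intro o
    match o with
    | none =>
      rw [hBw]
      simp only [Option.elim_none]
      rw [hFw, liftAdj_mk, if_pos rfl]
    | some c =>
      refine c.ind ?_
      intro z
      rw [hBw]
      simp only [Option.elim_some, liftAdj_mk]
      rw [hFw, liftAdj_mk, if_neg (hrne z)]
      exact congrArg some (SimpleGraph.ConnectedComponent.sound (hreach z).symm)
  have hequiv : H.ConnectedComponent ≃ Option G.ConnectedComponent :=
    ⟨Fw, Bw, hleft, hright⟩
  rw [numCompOfEdges, numCompOfEdges, Nat.card_congr hequiv, nat_card_option]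

lemma fiber_sum {ι κ : Type*} [DecidableEq ι] [DecidableEq κ] (φ : ι → κ) (v : ι → ℝ) :
    ∀ (B : Finset κ) (T : Finset ι), (∀ f ∈ T, φ f ∈ B) →
    ∑ A ∈ T.powerset.filter (fun A => A.image φ = B), ∏ f ∈ A, v f
      = ∏ g ∈ B, ((∏ f ∈ T.filter (fun f => φ f = g), (1 + v f)) - 1) := by
  intro B
  induction B using Finset.induction_on with
  | empty =>
    intro T hT
    have : T.powerset.filter (fun A => A.image φ = ∅) = {∅} := by
      ext A
      simp only [Finset.mem_filter, Finset.mem_powerset, Finset.image_eq_empty,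
        Finset.mem_singleton]
      exact ⟨fun h => h.2, fun h => ⟨h ▸ Finset.empty_subset T, h⟩⟩
    rw [this]
    simp
  | @insert g B₀ hg ih =>
    intro T hT
    set T₁ := T.filter (fun f => φ f = g) with hT₁
    set T₂ := T.filter (fun f => ¬ φ f = g) with hT₂
    have hdisj : Disjoint T₁ T₂ := Finset.disjoint_filter_filter_not T T (fun f => φ f = g)
    have hunion : T₁ ∪ T₂ = T := Finset.filter_union_filter_not_eq _ T
    -- the pair set
    set P := (T₁.powerset.filter (fun S => S.Nonempty)) ×ˢ
      (T₂.powerset.filter (fun A₂ => A₂.image φ = B₀)) with hP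
    have key : ∑ A ∈ T.powerset.filter (fun A => A.image φ = insert g B₀), ∏ f ∈ A, v f
        = ∑ p ∈ P, (∏ f ∈ p.1, v f) * ∏ f ∈ p.2, v f := by
      refine Finset.sum_nbij' (fun A => (A ∩ T₁, A ∩ T₂)) (fun p => p.1 ∪ p.2) ?_ ?_ ?_ ?_ ?_
      · intro A hA
        rw [Finset.mem_filter, Finset.mem_powerset] at hA
        obtain ⟨hAT, hAim⟩ := hA
        rw [hP, Finset.mem_product]
        constructor
        · rw [Finset.mem_filter, Finset.mem_powerset]
          refine ⟨Finset.inter_subset_right, ?_⟩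
          have hgim : g ∈ A.image φ := by rw [hAim]; exact Finset.mem_insert_self _ _
          rw [Finset.mem_image] at hgim
          obtain ⟨f, hfA, hfg⟩ := hgim
          exact ⟨f, Finset.mem_inter.mpr ⟨hfA, Finset.mem_filter.mpr ⟨hAT hfA, hfg⟩⟩⟩
        · rw [Finset.mem_filter, Finset.mem_powerset]
          refine ⟨Finset.inter_subset_right, ?_⟩
          ext g'
          simp only [Finset.mem_image, Finset.mem_inter, hT₂, Finset.mem_filter]
          constructor
          · rintro ⟨f, ⟨hfA, _, hfne⟩, rfl⟩
            have : φ f ∈ insert g B₀ := hAim ▸ Finset.mem_image_of_mem φ hfA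
            rcases Finset.mem_insert.mp this with h | h
            · exact absurd h hfne
            · exact h
          · intro hg'
            have hne : g' ≠ g := fun h => hg (h ▸ hg')
            have : g' ∈ A.image φ := hAim ▸ Finset.mem_insert_of_mem hg'
            rw [Finset.mem_image] at this
            obtain ⟨f, hfA, rfl⟩ := this
            exact ⟨f, ⟨hfA, hAT hfA, hne⟩, rfl⟩
      · intro p hp
        rw [hP, Finset.mem_product, Finset.mem_filter, Finset.mem_filter,
          Finset.mem_powerset, Finset.mem_powerset] at hp
        obtain ⟨⟨h1, hne⟩, h2, him⟩ := hp
        rw [Finset.mem_filter, Finset.mem_powerset]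
        constructor
        · exact Finset.union_subset (h1.trans (hunion ▸ Finset.subset_union_left))
            (h2.trans (hunion ▸ Finset.subset_union_right))
        · rw [Finset.image_union, him]
          have : p.1.image φ = {g} := by
            ext g'
            simp only [Finset.mem_image, Finset.mem_singleton]
            constructor
            · rintro ⟨f, hf, rfl⟩
              exact (Finset.mem_filter.mp (h1 hf)).2
            · rintro rfl
              obtain ⟨f, hf⟩ := hne
              exact ⟨f, hf, (Finset.mem_filter.mp (h1 hf)).2⟩
          rw [this, ← Finset.insert_eq]
      · intro A hA
        rw [Finset.mem_filter, Finset.mem_powerset] at hA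
        show A ∩ T₁ ∪ A ∩ T₂ = A
        rw [← Finset.inter_union_distrib_left, hunion, Finset.inter_eq_left.mpr hA.1]
      · intro p hp
        rw [hP, Finset.mem_product, Finset.mem_filter, Finset.mem_filter,
          Finset.mem_powerset, Finset.mem_powerset] at hp
        obtain ⟨⟨h1, -⟩, h2, -⟩ := hp
        have d1 : p.2 ∩ T₁ = ∅ := Finset.disjoint_iff_inter_eq_empty.mp
          (Finset.disjoint_left.mpr fun a ha => (Finset.disjoint_right.mp hdisj (h2 ha)))
        have d2 : p.1 ∩ T₂ = ∅ := Finset.disjoint_iff_inter_eq_empty.mp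
          (Finset.disjoint_left.mpr fun a ha => (Finset.disjoint_left.mp hdisj (h1 ha)))
        have e1 : (p.1 ∪ p.2) ∩ T₁ = p.1 := by
          rw [Finset.union_inter_distrib_right, Finset.inter_eq_left.mpr h1, d1,
            Finset.union_empty]
        have e2 : (p.1 ∪ p.2) ∩ T₂ = p.2 := by
          rw [Finset.union_inter_distrib_right, Finset.inter_eq_left.mpr h2, d2,
            Finset.empty_union]
        show ((p.1 ∪ p.2) ∩ T₁, (p.1 ∪ p.2) ∩ T₂) = p
        exact Prod.ext e1 e2
      · intro A hA
        rw [Finset.mem_filter, Finset.mem_powerset] at hA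
        have : A = (A ∩ T₁) ∪ (A ∩ T₂) := by
          rw [← Finset.inter_union_distrib_left, hunion, Finset.inter_eq_left.mpr hA.1]
        conv_lhs => rw [this]
        exact Finset.prod_union (Finset.disjoint_of_subset_left Finset.inter_subset_right
          (Finset.disjoint_of_subset_right Finset.inter_subset_right hdisj))
    rw [key, hP, Finset.sum_product]
    have hsplit : ∑ S ∈ T₁.powerset.filter (fun S => S.Nonempty),
        ∑ A₂ ∈ T₂.powerset.filter (fun A₂ => A₂.image φ = B₀), (∏ f ∈ S, v f) * ∏ f ∈ A₂, v f
        = (∑ S ∈ T₁.powerset.filter (fun S => S.Nonempty), ∏ f ∈ S, v f) *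
          ∑ A₂ ∈ T₂.powerset.filter (fun A₂ => A₂.image φ = B₀), ∏ f ∈ A₂, v f := by
      rw [Finset.sum_mul_sum]
    rw [hsplit]
    have htot : ∑ S ∈ T₁.powerset, ∏ f ∈ S, v f = ∏ f ∈ T₁, (1 + v f) := by
      have := Finset.prod_add v (fun _ => (1:ℝ)) T₁
      simp only [Finset.prod_const_one, mul_one] at this
      rw [show (fun f => 1 + v f) = (fun f => v f + 1) from funext fun f => add_comm _ _, this]
    have hne : T₁.powerset.filter (fun S => ¬ S.Nonempty) = {∅} := by
      ext S
      simp only [Finset.mem_filter, Finset.mem_powerset, Finset.not_nonempty_iff_eq_empty,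
        Finset.mem_singleton]
      exact ⟨fun h => h.2, fun h => ⟨h ▸ Finset.empty_subset _, h⟩⟩
    have h1 : ∑ S ∈ T₁.powerset.filter (fun S => S.Nonempty), ∏ f ∈ S, v f
        = (∏ f ∈ T₁, (1 + v f)) - 1 := by
      have := Finset.sum_filter_add_sum_filter_not T₁.powerset (fun S => S.Nonempty)
        (fun S => ∏ f ∈ S, v f)
      rw [hne, Finset.sum_singleton, Finset.prod_empty, htot] at this
      linarith
    have hT₂' : ∀ f ∈ T₂, φ f ∈ B₀ := by
      intro f hf
      rw [hT₂, Finset.mem_filter] at hf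
      rcases Finset.mem_insert.mp (hT f hf.1) with h | h
      · exact absurd h hf.2
      · exact h
    rw [h1, ih T₂ hT₂', Finset.prod_insert hg]
    congr 1
    refine Finset.prod_congr rfl ?_
    intro g' hg'
    have : T₂.filter (fun f => φ f = g') = T.filter (fun f => φ f = g') := by
      rw [hT₂, Finset.filter_filter]
      refine Finset.filter_congr ?_
      intro f hf
      constructor
      · rintro ⟨-, h⟩; exact h
      · intro h
        exact ⟨fun hh => hg (hh ▸ h ▸ hg'), h⟩
    rw [this]

noncomputable def coeff (E' : Finset (Sym2 V)) (k : ℕ) (v : Sym2 V → ℝ) : ℝ :=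
  ∑ A ∈ E'.powerset.filter (fun A => numCompOfEdges A = k), ∏ e ∈ A, v e

lemma coeff_eq_zero_of_lt (E' : Finset (Sym2 V)) (k : ℕ) (v : Sym2 V → ℝ)
    (h : k < numCompOfEdges E') : coeff E' k v = 0 := by
  rw [coeff]
  have : E'.powerset.filter (fun A => numCompOfEdges A = k) = ∅ := by
    rw [Finset.filter_eq_empty_iff]
    intro A hA
    rw [Finset.mem_powerset] at hA
    have := numComp_mono A E' hA
    omega
  rw [this, Finset.sum_empty]

lemma coeff_eq_zero_of_gt (E' : Finset (Sym2 V)) (k : ℕ) (v : Sym2 V → ℝ)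
    (h : Fintype.card V < k) : coeff E' k v = 0 := by
  rw [coeff]
  have : E'.powerset.filter (fun A => numCompOfEdges A = k) = ∅ := by
    rw [Finset.filter_eq_empty_iff]
    intro A hA
    have := numComp_le_card A
    omega
  rw [this, Finset.sum_empty]

lemma coeff_top (E' : Finset (Sym2 V)) (v : Sym2 V → ℝ) (hE : ∀ e ∈ E', ¬ e.IsDiag) :
    coeff E' (Fintype.card V) v = 1 := by
  rw [coeff]
  have : E'.powerset.filter (fun A => numCompOfEdges A = Fintype.card V) = {∅} := by
    ext A
    simp only [Finset.mem_filter, Finset.mem_powerset, Finset.mem_singleton]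
    constructor
    · rintro ⟨hAE, hA⟩
      by_contra hne
      obtain ⟨e, he⟩ := Finset.nonempty_iff_ne_empty.mpr hne
      obtain ⟨⟨x, y⟩, rfl⟩ := e.exists_rep
      have hxy : x ≠ y := by
        have := hE _ (hAE he)
        rwa [Sym2.mk_isDiag_iff] at this
      have := numComp_lt_card A x y hxy he
      omega
    · rintro rfl
      exact ⟨Finset.empty_subset _, numComp_empty⟩
  rw [this, Finset.sum_singleton, Finset.prod_empty]

lemma deletion_contraction (x y : V) (hxy : x ≠ y) (E'' : Finset (Sym2 V))
    (he : s(x,y) ∉ E'') (k : ℕ) (v : Sym2 V → ℝ) :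
    coeff (insert s(x,y) E'') k v = coeff E'' k v
      + v s(x,y) * coeff (E''.image (Sym2.map (fun z => if z = y then x else z))) (k+1)
          (fun g => (∏ f ∈ E''.filter
              (fun f => Sym2.map (fun z => if z = y then x else z) f = g), (1 + v f)) - 1) := by
  set φ : Sym2 V → Sym2 V := Sym2.map (fun z => if z = y then x else z) with hφ
  set w : Sym2 V → ℝ :=
    fun g => (∏ f ∈ E''.filter (fun f => φ f = g), (1 + v f)) - 1 with hw
  set Eφ := E''.image φ with hEφ
  rw [coeff, Finset.sum_filter, Finset.sum_powerset_insert he]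
  congr 1
  · rw [coeff, Finset.sum_filter]
  -- now the contraction term
  have step1 : ∀ A ∈ E''.powerset,
      (if numCompOfEdges (insert s(x,y) A) = k then ∏ f ∈ insert s(x,y) A, v f else 0)
      = v s(x,y) * (if numCompOfEdges (A.image φ) = k + 1 then ∏ f ∈ A, v f else 0) := by
    intro A hA
    rw [Finset.mem_powerset] at hA
    have hnotinA : s(x,y) ∉ A := fun h => he (hA h)
    have hcond : (numCompOfEdges (insert s(x,y) A) = k) ↔
        (numCompOfEdges (A.image φ) = k + 1) := by
      rw [hφ, numComp_image_contract x y hxy A]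
      omega
    rw [Finset.prod_insert hnotinA, mul_ite, mul_zero]
    by_cases hc : numCompOfEdges (insert s(x,y) A) = k
    · rw [if_pos hc, if_pos (hcond.mp hc)]
    · rw [if_neg hc, if_neg (fun h => hc (hcond.mpr h))]
  rw [Finset.sum_congr rfl step1, ← Finset.mul_sum]
  congr 1
  have hmap : ∀ A ∈ E''.powerset, A.image φ ∈ Eφ.powerset := by
    intro A hA
    rw [Finset.mem_powerset] at hA ⊢
    exact Finset.image_subset_image hA
  rw [← Finset.sum_fiberwise_of_maps_to hmap
    (fun A => if numCompOfEdges (A.image φ) = k + 1 then ∏ f ∈ A, v f else 0)]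
  rw [coeff, Finset.sum_filter]
  refine Finset.sum_congr rfl ?_
  intro B hB
  rw [Finset.mem_powerset] at hB
  have hinner : ∀ A ∈ E''.powerset.filter (fun A => A.image φ = B),
      (if numCompOfEdges (A.image φ) = k + 1 then ∏ f ∈ A, v f else 0)
      = (if numCompOfEdges B = k + 1 then ∏ f ∈ A, v f else 0) := by
    intro A hA
    rw [(Finset.mem_filter.mp hA).2]
  rw [Finset.sum_congr rfl hinner]
  by_cases hc : numCompOfEdges B = k + 1
  · simp only [if_pos hc]
    -- fiber sum identity
    set T := E''.filter (fun f => φ f ∈ B) with hT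
    have hsame : E''.powerset.filter (fun A => A.image φ = B)
        = T.powerset.filter (fun A => A.image φ = B) := by
      ext A
      simp only [Finset.mem_filter, Finset.mem_powerset]
      constructor
      · rintro ⟨hAE, him⟩
        refine ⟨?_, him⟩
        intro f hf
        rw [hT, Finset.mem_filter]
        exact ⟨hAE hf, him ▸ Finset.mem_image_of_mem φ hf⟩
      · rintro ⟨hAT, him⟩
        exact ⟨hAT.trans (hT ▸ Finset.filter_subset _ _), him⟩
    have hTmaps : ∀ f ∈ T, φ f ∈ B := by
      intro f hf
      rw [hT, Finset.mem_filter] at hf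
      exact hf.2
    rw [hsame, fiber_sum φ v B T hTmaps]
    refine Finset.prod_congr rfl ?_
    intro g hg
    have : T.filter (fun f => φ f = g) = E''.filter (fun f => φ f = g) := by
      rw [hT, Finset.filter_filter]
      refine Finset.filter_congr ?_
      intro f hf
      constructor
      · rintro ⟨-, h⟩; exact h
      · intro h; exact ⟨h ▸ hg, h⟩
    rw [hw, this]
  · simp only [if_neg hc, Finset.sum_const_zero]

lemma prod_one_add_bounds {ι : Type*} (s : Finset ι) (v : ι → ℝ)
    (h : ∀ f ∈ s, -2 ≤ v f ∧ v f ≤ 0) :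
    -2 ≤ (∏ f ∈ s, (1 + v f)) - 1 ∧ (∏ f ∈ s, (1 + v f)) - 1 ≤ 0 := by
  have habs : |∏ f ∈ s, (1 + v f)| ≤ 1 := by
    rw [Finset.abs_prod]
    refine Finset.prod_le_one (fun f _ => abs_nonneg _) ?_
    intro f hf
    rw [abs_le]
    constructor <;> linarith [(h f hf).1, (h f hf).2]
  have h2 := abs_le.mp habs
  constructor <;> linarith [h2.1, h2.2]

lemma prod_one_add_bounds_strict {ι : Type*} [DecidableEq ι] (s : Finset ι) (hs : s.Nonempty)
    (v : ι → ℝ) (h : ∀ f ∈ s, -2 < v f ∧ v f < 0) :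
    -2 < (∏ f ∈ s, (1 + v f)) - 1 ∧ (∏ f ∈ s, (1 + v f)) - 1 < 0 := by
  obtain ⟨f0, hf0⟩ := hs
  have habs : |∏ f ∈ s, (1 + v f)| < 1 := by
    rw [Finset.abs_prod, ← Finset.mul_prod_erase _ _ hf0]
    have h1 : |1 + v f0| < 1 := by
      rw [abs_lt]; constructor <;> linarith [(h f0 hf0).1, (h f0 hf0).2]
    have h2 : ∏ f ∈ s.erase f0, |1 + v f| ≤ 1 := by
      refine Finset.prod_le_one (fun f _ => abs_nonneg _) ?_
      intro f hf
      have hfs := Finset.mem_of_mem_erase hf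
      rw [abs_le]; constructor <;> linarith [(h f hfs).1, (h f hfs).2]
    calc |1 + v f0| * ∏ f ∈ s.erase f0, |1 + v f| ≤ |1 + v f0| * 1 :=
          mul_le_mul_of_nonneg_left h2 (abs_nonneg _)
      _ = |1 + v f0| := mul_one _
      _ < 1 := h1
  have h2 := abs_lt.mp habs
  constructor <;> linarith [h2.1, h2.2]

lemma main : ∀ (N : ℕ) (E' : Finset (Sym2 V)), E'.card ≤ N →
    (∀ e ∈ E', ¬ e.IsDiag) → ∀ (v : Sym2 V → ℝ), (∀ e ∈ E', -2 ≤ v e ∧ v e ≤ 0) →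
    ((∀ k, numCompOfEdges E' ≤ k → k ≤ Fintype.card V →
      0 ≤ (-1:ℝ) ^ ((Fintype.card V : ℤ) - k) * coeff E' k v) ∧
    ((∀ e ∈ E', -2 < v e ∧ v e < 0) → ∀ k, numCompOfEdges E' ≤ k → k ≤ Fintype.card V →
      0 < (-1:ℝ) ^ ((Fintype.card V : ℤ) - k) * coeff E' k v)) := by
  intro N
  induction N with
  | zero =>
    intro E' hcard hE v hv
    have hE' : E' = ∅ := Finset.card_eq_zero.mp (Nat.le_zero.mp hcard)
    subst hE'
    have hkeq : ∀ k : ℕ, numCompOfEdges (∅ : Finset (Sym2 V)) ≤ k → k ≤ Fintype.card V →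
        k = Fintype.card V := by
      intro k h1 h2
      have := numComp_empty (V := V)
      omega
    constructor
    · intro k hck hkn
      rw [hkeq k hck hkn, coeff_top _ _ (by simp), sub_self, zpow_zero, mul_one]
      norm_num
    · intro _ k hck hkn
      rw [hkeq k hck hkn, coeff_top _ _ (by simp), sub_self, zpow_zero, mul_one]
      norm_num
  | succ N IH =>
    intro E' hcard hE v hv
    rcases Finset.eq_empty_or_nonempty E' with rfl | ⟨e, he⟩
    · exact IH ∅ (by simp) hE v hv
    obtain ⟨⟨x, y⟩, rfl⟩ := e.exists_rep
    have hxy : x ≠ y := by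
      have := hE _ he
      rwa [Sym2.mk_isDiag_iff] at this
    set E'' := E'.erase s(x,y) with hE''def
    have hins : insert s(x,y) E'' = E' := Finset.insert_erase he
    have hnotin : s(x,y) ∉ E'' := Finset.notMem_erase _ _
    set φ : Sym2 V → Sym2 V := Sym2.map (fun z => if z = y then x else z) with hφ
    set Eφ := E''.image φ with hEφ
    set w : Sym2 V → ℝ :=
      fun g => (∏ f ∈ E''.filter (fun f => φ f = g), (1 + v f)) - 1 with hw
    have hcard'' : E''.card ≤ N := by
      have h1 : E''.card = E'.card - 1 := by
        rw [hE''def]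
        exact Finset.card_erase_of_mem he
      have h2 : 1 ≤ E'.card := Finset.card_pos.mpr ⟨_, he⟩
      omega
    have hcardφ : Eφ.card ≤ N := le_trans Finset.card_image_le hcard''
    have hE''sub : E'' ⊆ E' := Finset.erase_subset _ _
    have hEnd'' : ∀ f ∈ E'', ¬ f.IsDiag := fun f hf => hE f (hE''sub hf)
    have hv'' : ∀ f ∈ E'', -2 ≤ v f ∧ v f ≤ 0 := fun f hf => hv f (hE''sub hf)
    have hEndφ : ∀ g ∈ Eφ, ¬ g.IsDiag := by
      intro g hg
      rw [hEφ, Finset.mem_image] at hg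
      obtain ⟨f, hf, rfl⟩ := hg
      obtain ⟨⟨u, u'⟩, rfl⟩ := f.exists_rep
      have huu : u ≠ u' := by
        have := hEnd'' _ hf
        rwa [Sym2.mk_isDiag_iff] at this
      rw [hφ, Sym2.map_pair_eq, Sym2.mk_isDiag_iff]
      intro heq
      by_cases h1 : u = y <;> by_cases h2 : u' = y
      · exact huu (h1.trans h2.symm)
      · rw [if_pos h1, if_neg h2] at heq
        subst h1
        rw [← heq] at hf
        have hf' : s(u, x) ∈ E'' := hf
        rw [Sym2.eq_swap] at hf'
        exact hnotin hf'
      · rw [if_neg h1, if_pos h2] at heq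
        subst h2
        rw [heq] at hf
        exact hnotin hf
      · rw [if_neg h1, if_neg h2] at heq
        exact huu heq
    have hwbounds : ∀ g ∈ Eφ, -2 ≤ w g ∧ w g ≤ 0 := by
      intro g hg
      refine prod_one_add_bounds _ _ ?_
      intro f hf
      exact hv'' f (Finset.mem_filter.mp hf).1
    have hcomp : numCompOfEdges Eφ = numCompOfEdges E' + 1 := by
      rw [hEφ, hφ, numComp_image_contract x y hxy E'', hins]
    have hdc : ∀ k, coeff E' k v = coeff E'' k v + v s(x,y) * coeff Eφ (k+1) w := by
      intro k
      rw [← hins]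
      exact deletion_contraction x y hxy E'' hnotin k v
    obtain ⟨IH1, IH1s⟩ := IH E'' hcard'' hEnd'' v hv''
    obtain ⟨IH2, IH2s⟩ := IH Eφ hcardφ hEndφ w hwbounds
    have hsign : ∀ k : ℕ, ((-1:ℝ) ^ ((Fintype.card V : ℤ) - k))
        = -((-1:ℝ) ^ ((Fintype.card V : ℤ) - (k+1))) := by
      intro k
      have hstep : ((Fintype.card V : ℤ) - k) = ((Fintype.card V : ℤ) - (k+1)) + 1 := by
        omega
      rw [hstep, zpow_add_one₀ (by norm_num : (-1:ℝ) ≠ 0)]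
      ring
    have ht1 : ∀ k ≤ Fintype.card V,
        0 ≤ (-1:ℝ) ^ ((Fintype.card V : ℤ) - k) * coeff E'' k v := by
      intro k hkn
      by_cases h1 : numCompOfEdges E'' ≤ k
      · exact IH1 k h1 hkn
      · rw [coeff_eq_zero_of_lt _ _ _ (lt_of_not_ge h1), mul_zero]
    constructor
    · intro k hck hkn
      rcases eq_or_lt_of_le hkn with hk | hk
      · rw [hk, coeff_top _ _ hE, sub_self, zpow_zero, mul_one]
        norm_num
      · have hk1 : k + 1 ≤ Fintype.card V := hk
        have t1 := ht1 k hkn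
        have t2 : 0 ≤ (-1:ℝ) ^ ((Fintype.card V : ℤ) - ((k:ℕ)+1)) * coeff Eφ (k+1) w := by
          refine IH2 (k+1) ?_ hk1
          omega
        have hve : v s(x,y) ≤ 0 := (hv _ he).2
        rw [hdc k, mul_add, hsign k]
        rw [hsign k] at t1
        have hre : -((-1:ℝ) ^ ((Fintype.card V : ℤ) - ((k:ℕ)+1))) * (v s(x,y) * coeff Eφ (k+1) w)
            = (- v s(x,y)) * ((-1:ℝ) ^ ((Fintype.card V : ℤ) - ((k:ℕ)+1)) * coeff Eφ (k+1) w) := by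
          ring
        rw [hre]
        have hprod := mul_nonneg (neg_nonneg.mpr hve) t2
        linarith
    · intro hv' k hck hkn
      rcases eq_or_lt_of_le hkn with hk | hk
      · rw [hk, coeff_top _ _ hE, sub_self, zpow_zero, mul_one]
        norm_num
      · have hk1 : k + 1 ≤ Fintype.card V := hk
        have hwstrict : ∀ g ∈ Eφ, -2 < w g ∧ w g < 0 := by
          intro g hg
          rw [hEφ, Finset.mem_image] at hg
          obtain ⟨f, hf, hfg⟩ := hg
          have hkey := prod_one_add_bounds_strict (E''.filter (fun f => φ f = g))
            ⟨f, Finset.mem_filter.mpr ⟨hf, hfg⟩⟩ v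
            (fun f' hf' => hv' f' (hE''sub (Finset.mem_filter.mp hf').1))
          rw [hw]
          exact hkey
        have t1 := ht1 k hkn
        have t2 : 0 < (-1:ℝ) ^ ((Fintype.card V : ℤ) - ((k:ℕ)+1)) * coeff Eφ (k+1) w := by
          refine IH2s hwstrict (k+1) ?_ hk1
          omega
        have hve : v s(x,y) < 0 := (hv' _ he).2
        rw [hdc k, mul_add, hsign k]
        rw [hsign k] at t1
        have hre : -((-1:ℝ) ^ ((Fintype.card V : ℤ) - ((k:ℕ)+1))) * (v s(x,y) * coeff Eφ (k+1) w)
            = (- v s(x,y)) * ((-1:ℝ) ^ ((Fintype.card V : ℤ) - ((k:ℕ)+1)) * coeff Eφ (k+1) w) := by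
          ring
        rw [hre]
        have hprod := mul_pos (neg_pos.mpr hve) t2
        linarith

end TutteAux

/-- The coefficient `C_G^{[k]}(v) = ∑_{A ⊆ E, k(A) = k} ∏_{e ∈ A} v_e` of `q^k` in the
multivariate Tutte polynomial `Z_G(q,v)`. -/
noncomputable def tutteCoeff {V : Type*} [Fintype V] [DecidableEq V] (G : SimpleGraph V)
    [DecidableRel G.Adj] (k : ℕ) (v : Sym2 V → ℝ) : ℝ :=
  ∑ A ∈ G.edgeFinset.powerset.filter (fun A => numCompOfEdges A = k), ∏ e ∈ A, v e

/-- For a finite simple graph `G` with `n` vertices and `c` components and edge weights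
`-2 ≤ v_e ≤ 0`:  `C_G^{[k]}(v) = 0` for `1 ≤ k < c`, `(-1)^{n-k} C_G^{[k]}(v) ≥ 0` for
`c ≤ k ≤ n`, and `C_G^{[n]}(v) = 1`.  Moreover the inequalities are strict when
`-2 < v_e < 0` for every edge. -/
theorem tutteCoeff_alternating_signs {V : Type*} [Fintype V] [DecidableEq V]
    (G : SimpleGraph V) [DecidableRel G.Adj] (v : Sym2 V → ℝ)
    (n c : ℕ) (hn : n = Fintype.card V) (hc : c = Nat.card G.ConnectedComponent)
    (hv : ∀ e ∈ G.edgeFinset, -2 ≤ v e ∧ v e ≤ 0) :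
    (∀ k, 1 ≤ k → k < c → tutteCoeff G k v = 0) ∧
    (∀ k, c ≤ k → k ≤ n → 0 ≤ (-1 : ℝ) ^ ((n : ℤ) - k) * tutteCoeff G k v) ∧
    tutteCoeff G n v = 1 ∧
    ((∀ e ∈ G.edgeFinset, -2 < v e ∧ v e < 0) →
      ∀ k, c ≤ k → k ≤ n → 0 < (-1 : ℝ) ^ ((n : ℤ) - k) * tutteCoeff G k v) := by
  subst hn
  subst hc
  have hE : ∀ e ∈ G.edgeFinset, ¬ e.IsDiag := by
    intro e he
    exact SimpleGraph.not_isDiag_of_mem_edgeSet G (SimpleGraph.mem_edgeFinset.mp he)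
  have hGE : SimpleGraph.fromEdgeSet ((G.edgeFinset : Finset (Sym2 V)) : Set (Sym2 V)) = G := by
    rw [SimpleGraph.coe_edgeFinset, SimpleGraph.fromEdgeSet_edgeSet]
  have hnum : numCompOfEdges G.edgeFinset = Nat.card G.ConnectedComponent := by
    rw [numCompOfEdges, hGE]
  have hcoeff : ∀ k, tutteCoeff G k v = TutteAux.coeff G.edgeFinset k v := fun _ => rfl
  obtain ⟨main1, main2⟩ :=
    TutteAux.main G.edgeFinset.card G.edgeFinset le_rfl hE v hv
  refine ⟨?_, ?_, ?_, ?_⟩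
  · intro k _ hk
    rw [hcoeff k]
    exact TutteAux.coeff_eq_zero_of_lt _ _ _ (by omega)
  · intro k hck hkn
    rw [hcoeff k]
    exact main1 k (by omega) hkn
  · rw [hcoeff _]
    exact TutteAux.coeff_top _ _ hE
  · intro hv' k hck hkn
    rw [hcoeff k]
    exact main2 hv' k (by omega) hkn
end

section
/- Let M be a matroid with finite ground set E, rank function r, and rank r(M) = r(E), and let v : E → ℝ satisfy v_e ≥ −1 for every loop e of M and −2 ≤ v_e ≤ 0 for every non-loop element e. Then: (a) (−1)^s C̃_M^{[s]}(v) ≥ 0 for all 0 ≤ s ≤ r(M), and C̃_M^{[0]}(v) = ∏_{loops e of M} (1 + v_e); (b) Z̃_M(q,v) ≥ 0 for all real q < 0, with strict inequality if and only if every loop e has v_e > −1. Moreover, if v_e > −1 for every loop e and −2 < v_e < 0 for every non-loop element e, then (−1)^s C̃_M^{[s]}(v) > 0 for all 0 ≤ s ≤ r(M). -/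
open Finset

/-- A matroid with ground set the finite type `α`, presented by its rank function
(normalized, monotone, submodular). -/
structure RankMatroid (α : Type*) [DecidableEq α] where
  r : Finset α → ℕ
  r_le_card : ∀ A : Finset α, r A ≤ A.card
  mono : ∀ ⦃A B : Finset α⦄, A ⊆ B → r A ≤ r B
  submodular : ∀ A B : Finset α, r (A ∪ B) + r (A ∩ B) ≤ r A + r B

/-- The multivariate Tutte polynomial of a matroid:
`Z̃_M(q,v) = ∑_{A ⊆ E} q^{-r(A)} ∏_{e ∈ A} v_e`. -/
noncomputable def matZ {α : Type*} [DecidableEq α] [Fintype α] (M : RankMatroid α)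
    (q : ℝ) (v : α → ℝ) : ℝ :=
  ∑ A ∈ (Finset.univ : Finset α).powerset, q ^ (-(M.r A : ℤ)) * ∏ e ∈ A, v e

/-- The coefficient `C̃_M^{[s]}(v) = ∑_{A ⊆ E, r(A) = s} ∏_{e ∈ A} v_e` of `q^{-s}` in
`Z̃_M(q,v)`. -/
noncomputable def matCoeff {α : Type*} [DecidableEq α] [Fintype α] (M : RankMatroid α)
    (s : ℕ) (v : α → ℝ) : ℝ :=
  ∑ A ∈ (Finset.univ : Finset α).powerset.filter (fun A => M.r A = s), ∏ e ∈ A, v e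

namespace TutteAux

variable {α : Type*} [DecidableEq α]

lemma r_empty (M : RankMatroid α) : M.r ∅ = 0 :=
  Nat.le_zero.mp (by simpa using M.r_le_card ∅)

lemma r_singleton_le (M : RankMatroid α) (e : α) : M.r {e} ≤ 1 := by
  simpa using M.r_le_card {e}

lemma union_singleton' (A : Finset α) (e : α) : A ∪ {e} = insert e A := by
  ext x; simp [or_comm]

lemma r_insert_le (M : RankMatroid α) (e : α) (A : Finset α) :
    M.r (insert e A) ≤ M.r A + M.r {e} := by
  by_cases he : e ∈ A
  · rw [Finset.insert_eq_self.mpr he]; exact Nat.le_add_right _ _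
  · have h := M.submodular A {e}
    rw [union_singleton' A e, Finset.inter_singleton_of_notMem he, r_empty] at h
    omega

lemma r_insert_loop (M : RankMatroid α) {e : α} (h : M.r {e} = 0) (A : Finset α) :
    M.r (insert e A) = M.r A := by
  have h1 := r_insert_le M e A
  have h2 := M.mono (Finset.subset_insert e A)
  omega

lemma r_insert_ge (M : RankMatroid α) (e : α) (A : Finset α) :
    M.r A ≤ M.r (insert e A) := M.mono (Finset.subset_insert e A)

/-- if `e ∈ A`, `f` parallel to `e`, then adding `f` doesn't change the rank -/
lemma r_insert_parallel (M : RankMatroid α) {e f : α} {A : Finset α}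
    (he : e ∈ A) (hf : f ∉ A) (h1 : M.r {e} = 1) (hp : M.r ({e, f} : Finset α) = 1) :
    M.r (insert f A) = M.r A := by
  have h := M.submodular A {e, f}
  have hu : A ∪ {e, f} = insert f A := by
    ext x; by_cases hx : x = e <;> by_cases hx' : x = f <;> simp [hx, hx', he]
  have hi : A ∩ ({e, f} : Finset α) = {e} := by
    ext x; by_cases hx : x = e <;> by_cases hx' : x = f <;>
      simp [hx, hx', he] <;> simp_all
  rw [hu, hi, h1, hp] at h
  have h2 := r_insert_ge M f A
  omega

/-- Contraction of a matroid by a single element. -/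
def contract (M : RankMatroid α) (e : α) : RankMatroid α where
  r A := M.r (insert e A) - M.r {e}
  r_le_card A := by
    show M.r (insert e A) - M.r {e} ≤ A.card
    have h1 := r_insert_le M e A
    have h2 := M.r_le_card A
    omega
  mono A B hAB := by
    show M.r (insert e A) - M.r {e} ≤ M.r (insert e B) - M.r {e}
    have := M.mono (Finset.insert_subset_insert e hAB)
    omega
  submodular A B := by
    show M.r (insert e (A ∪ B)) - M.r {e} + (M.r (insert e (A ∩ B)) - M.r {e}) ≤
      (M.r (insert e A) - M.r {e}) + (M.r (insert e B) - M.r {e})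
    have h := M.submodular (insert e A) (insert e B)
    have hu : insert e A ∪ insert e B = insert e (A ∪ B) := by
      ext x; simp only [Finset.mem_union, Finset.mem_insert]; tauto
    have hi : insert e A ∩ insert e B = insert e (A ∩ B) := by
      ext x; simp only [Finset.mem_inter, Finset.mem_insert]; tauto
    rw [hu, hi] at h
    have k1 := M.mono (Finset.singleton_subset_iff.mpr (Finset.mem_insert_self e (A ∪ B)))
    have k2 := M.mono (Finset.singleton_subset_iff.mpr (Finset.mem_insert_self e (A ∩ B)))
    have k3 := M.mono (Finset.singleton_subset_iff.mpr (Finset.mem_insert_self e A))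
    have k4 := M.mono (Finset.singleton_subset_iff.mpr (Finset.mem_insert_self e B))
    omega

lemma contract_r (M : RankMatroid α) {e : α} (h1 : M.r {e} = 1) (A : Finset α) :
    (contract M e).r A = M.r (insert e A) - 1 := by
  show M.r (insert e A) - M.r {e} = _
  rw [h1]

/-- The rank-`s` coefficient of the multivariate Tutte polynomial over ground set `S`. -/
noncomputable def Zc (M : RankMatroid α) (S : Finset α) (v : α → ℝ) (s : ℕ) : ℝ :=
  ∑ A ∈ S.powerset.filter (fun A => M.r A = s), ∏ e ∈ A, v e

lemma Zc_eq_sum_ite (M : RankMatroid α) (S : Finset α) (v : α → ℝ) (s : ℕ) :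
    Zc M S v s = ∑ A ∈ S.powerset, (if M.r A = s then ∏ e ∈ A, v e else 0) := by
  rw [Zc, Finset.sum_filter]

lemma Zc_insert (M : RankMatroid α) {e : α} {S : Finset α} (he : e ∉ S) (v : α → ℝ) (s : ℕ) :
    Zc M (insert e S) v s = Zc M S v s +
      ∑ A ∈ S.powerset, (if M.r (insert e A) = s then v e * ∏ x ∈ A, v x else 0) := by
  rw [Zc_eq_sum_ite, Zc_eq_sum_ite, Finset.sum_powerset_insert he]
  congr 1
  refine Finset.sum_congr rfl (fun A hA => ?_)
  have heA : e ∉ A := fun h => he (Finset.mem_powerset.mp hA h)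
  rw [Finset.prod_insert heA]

lemma Zc_loop (M : RankMatroid α) {e : α} {S : Finset α} (he : e ∈ S)
    (h0 : M.r {e} = 0) (v : α → ℝ) (s : ℕ) :
    Zc M S v s = (1 + v e) * Zc M (S.erase e) v s := by
  conv_lhs => rw [← Finset.insert_erase he]
  rw [Zc_insert M (Finset.notMem_erase e S) v s]
  have key : ∑ A ∈ (S.erase e).powerset,
      (if M.r (insert e A) = s then v e * ∏ x ∈ A, v x else 0)
      = v e * Zc M (S.erase e) v s := by
    rw [Zc_eq_sum_ite, Finset.mul_sum]
    refine Finset.sum_congr rfl (fun A _ => ?_)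
    rw [r_insert_loop M h0 A]
    by_cases h : M.r A = s <;> simp [h]
  rw [key]; ring

lemma Zc_dc (M : RankMatroid α) {e : α} {S : Finset α} (he : e ∈ S)
    (h1 : M.r {e} = 1) (v : α → ℝ) (s : ℕ) :
    Zc M S v (s + 1) = Zc M (S.erase e) v (s + 1) +
      v e * Zc (contract M e) (S.erase e) v s := by
  conv_lhs => rw [← Finset.insert_erase he]
  rw [Zc_insert M (Finset.notMem_erase e S) v (s + 1)]
  congr 1
  rw [Zc_eq_sum_ite, Finset.mul_sum]
  refine Finset.sum_congr rfl (fun A _ => ?_)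
  have hge : 1 ≤ M.r (insert e A) := by
    have := M.mono (Finset.singleton_subset_iff.mpr (Finset.mem_insert_self e A))
    omega
  have hiff : (M.r (insert e A) = s + 1) ↔ ((contract M e).r A = s) := by
    rw [contract_r M h1]; omega
  by_cases h : M.r (insert e A) = s + 1
  · rw [if_pos h, if_pos (hiff.mp h)]
  · rw [if_neg h, if_neg (fun hc => h (hiff.mpr hc))]; ring

lemma Zc_merge (M : RankMatroid α) {e f : α} {S : Finset α} (he : e ∈ S) (hf : f ∈ S)
    (hef : e ≠ f) (h1e : M.r {e} = 1) (h1f : M.r {f} = 1)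
    (hp : M.r ({e, f} : Finset α) = 1) (v : α → ℝ) (s : ℕ) :
    Zc M S v s = Zc M (S.erase f) (Function.update v e (v e + v f + v e * v f)) s := by
  set T := (S.erase f).erase e with hT
  have heT : e ∉ T := Finset.notMem_erase e _
  have hfT' : f ∉ S.erase f := Finset.notMem_erase f S
  have hfT : f ∉ insert e T := by
    simp only [Finset.mem_insert]
    rintro (rfl | h)
    · exact hef rfl
    · exact hfT' (Finset.mem_of_mem_erase (hT ▸ h))
  have heSf : e ∈ S.erase f := Finset.mem_erase.mpr ⟨hef, he⟩
  have hSf : S.erase f = insert e T := (Finset.insert_erase heSf).symm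
  have hS : S = insert f (insert e T) := by
    rw [← hSf, Finset.insert_erase hf]
  set w := v e + v f + v e * v f with hw
  set v' := Function.update v e w with hv'
  rw [hSf]
  conv_lhs => rw [hS]
  rw [Zc_insert M hfT v s, Zc_insert M heT v s, Zc_insert M heT v' s]
  -- expand the last sum over insert e T
  rw [Finset.sum_powerset_insert heT
    (fun A => if M.r (insert f A) = s then v f * ∏ x ∈ A, v x else 0)]
  have hZT : Zc M T v' s = Zc M T v s := by
    rw [Zc_eq_sum_ite, Zc_eq_sum_ite]
    refine Finset.sum_congr rfl (fun A hA => ?_)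
    have heA : e ∉ A := fun h => heT (Finset.mem_powerset.mp hA h)
    congr 1
    refine Finset.prod_congr rfl (fun x hx => ?_)
    have hxe : x ≠ e := fun hxe => heA (by rwa [hxe] at hx)
    rw [hv', Function.update_of_ne hxe]
  rw [hZT, add_assoc]
  congr 1
  simp only [← Finset.sum_add_distrib]
  refine Finset.sum_congr rfl (fun A hA => ?_)
  have hAT : A ⊆ T := Finset.mem_powerset.mp hA
  have heA : e ∉ A := fun h => heT (hAT h)
  have hfA : f ∉ A := fun h => hfT (Finset.mem_insert_of_mem (hAT h))
  have hfeA : f ∉ insert e A := by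
    simp only [Finset.mem_insert]; rintro (rfl | h); exact hef rfl; exact hfA h
  have hprod : ∏ x ∈ A, v' x = ∏ x ∈ A, v x := by
    refine Finset.prod_congr rfl (fun x hx => ?_)
    have hxe : x ≠ e := fun hxe => heA (by rwa [hxe] at hx)
    rw [hv', Function.update_of_ne hxe]
  have hr1 : M.r (insert f (insert e A)) = M.r (insert e A) :=
    r_insert_parallel M (Finset.mem_insert_self e A) hfeA h1e hp
  have hr2 : M.r (insert f A) = M.r (insert e A) := by
    have h' : M.r (insert e (insert f A)) = M.r (insert f A) := by
      refine r_insert_parallel M (Finset.mem_insert_self f A) ?_ h1f ?_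
      · simp only [Finset.mem_insert]; rintro (rfl | h); exact hef rfl; exact heA h
      · rw [Finset.pair_comm]; exact hp
    rw [← h', Finset.insert_comm, hr1]
  rw [Finset.prod_insert heA, hr1, hr2, hprod]
  have hv'e : v' e = w := Function.update_self e w v
  by_cases h : M.r (insert e A) = s
  · simp only [if_pos h, hv'e, hw]; ring
  · simp only [if_neg h]; ring

lemma Zc_empty (M : RankMatroid α) (v : α → ℝ) (s : ℕ) :
    Zc M ∅ v s = if s = 0 then 1 else 0 := by
  rw [Zc]
  by_cases h : s = 0 <;>
    simp [Finset.powerset_empty, Finset.filter_singleton, r_empty, h, eq_comm]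

/-- rank-0 subsets are exactly the subsets of the set of loops -/
lemma Zc_zero (M : RankMatroid α) (S : Finset α) (v : α → ℝ) :
    Zc M S v 0 = ∏ e ∈ S.filter (fun e => M.r {e} = 0), (1 + v e) := by
  have hL : S.powerset.filter (fun A => M.r A = 0)
      = (S.filter (fun e => M.r {e} = 0)).powerset := by
    ext A
    simp only [Finset.mem_filter, Finset.mem_powerset, Finset.subset_iff, Finset.mem_filter]
    constructor
    · rintro ⟨hsub, hr⟩
      exact fun x hx => ⟨hsub hx, Nat.le_zero.mp (hr ▸ M.mono (Finset.singleton_subset_iff.mpr hx))⟩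
    · intro h
      refine ⟨fun x hx => (h hx).1, ?_⟩
      induction A using Finset.induction_on with
      | empty => exact r_empty M
      | @insert a A' hx ih =>
        rw [r_insert_loop M (h (Finset.mem_insert_self a A')).2]
        exact ih (fun x hxA => h (Finset.mem_insert_of_mem hxA))
  rw [Zc, hL]
  have := Finset.prod_add v (fun _ => (1:ℝ)) (S.filter (fun e => M.r {e} = 0))
  simp only [Finset.prod_const_one, mul_one] at this
  rw [← this]
  exact Finset.prod_congr rfl (fun _ _ => add_comm _ _)

lemma r_erase_loop (M : RankMatroid α) {e : α} {S : Finset α} (he : e ∈ S)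
    (h0 : M.r {e} = 0) : M.r (S.erase e) = M.r S := by
  conv_rhs => rw [← Finset.insert_erase he]
  rw [r_insert_loop M h0]

lemma r_erase_parallel (M : RankMatroid α) {e f : α} {S : Finset α} (he : e ∈ S) (hf : f ∈ S)
    (hef : e ≠ f) (h1e : M.r {e} = 1) (hp : M.r ({e, f} : Finset α) = 1) :
    M.r (S.erase f) = M.r S := by
  conv_rhs => rw [← Finset.insert_erase hf]
  exact (r_insert_parallel M (Finset.mem_erase.mpr ⟨hef, he⟩) (Finset.notMem_erase f S)
    h1e hp).symm

lemma contract_r_erase (M : RankMatroid α) {e : α} {S : Finset α} (he : e ∈ S)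
    (h1 : M.r {e} = 1) : (contract M e).r (S.erase e) = M.r S - 1 := by
  rw [contract_r M h1, Finset.insert_erase he]

lemma core_nonneg (S : Finset α) : ∀ (M : RankMatroid α) (v : α → ℝ),
    (∀ e ∈ S, M.r {e} = 0 → -1 ≤ v e) →
    (∀ e ∈ S, M.r {e} ≠ 0 → -2 ≤ v e ∧ v e ≤ 0) →
    ∀ s : ℕ, 0 ≤ (-1 : ℝ) ^ s * Zc M S v s := by
  induction S using Finset.strongInduction with
  | _ S ih =>
  intro M v hl hnl s
  cases s with
  | zero =>
    rw [pow_zero, one_mul, Zc_zero]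
    refine Finset.prod_nonneg (fun e heL => ?_)
    rw [Finset.mem_filter] at heL
    have := hl e heL.1 heL.2
    linarith
  | succ s =>
    rcases Finset.eq_empty_or_nonempty S with rfl | hS
    · rw [Zc_empty]; simp
    by_cases hloop : ∃ e ∈ S, M.r {e} = 0
    · obtain ⟨e, heS, he0⟩ := hloop
      rw [Zc_loop M heS he0, mul_left_comm]
      have h1 : (0:ℝ) ≤ 1 + v e := by have := hl e heS he0; linarith
      refine mul_nonneg h1 (ih _ (Finset.erase_ssubset heS) M v ?_ ?_ _)
      · exact fun x hx => hl x (Finset.mem_of_mem_erase hx)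
      · exact fun x hx => hnl x (Finset.mem_of_mem_erase hx)
    push_neg at hloop
    have hr1 : ∀ e ∈ S, M.r {e} = 1 := fun e heS => by
      have h := r_singleton_le M e; have h2 := hloop e heS; omega
    by_cases hpar : ∃ e ∈ S, ∃ f ∈ S, e ≠ f ∧ M.r ({e, f} : Finset α) = 1
    · obtain ⟨e, heS, f, hfS, hef, hp⟩ := hpar
      rw [Zc_merge M heS hfS hef (hr1 e heS) (hr1 f hfS) hp]
      refine ih _ (Finset.erase_ssubset hfS) M _ ?_ ?_ _
      · intro x hx h0
        exact absurd h0 (hloop x (Finset.mem_of_mem_erase hx))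
      · intro x hx _
        by_cases hxe : x = e
        · subst hxe
          rw [Function.update_self]
          obtain ⟨ha, hb⟩ := hnl x (Finset.mem_of_mem_erase hx)
            (by rw [hr1 x (Finset.mem_of_mem_erase hx)]; omega)
          obtain ⟨hc, hd⟩ := hnl f hfS (by rw [hr1 f hfS]; omega)
          constructor <;> nlinarith
        · rw [Function.update_of_ne hxe]
          exact hnl x (Finset.mem_of_mem_erase hx)
            (by rw [hr1 x (Finset.mem_of_mem_erase hx)]; omega)
    · push_neg at hpar
      obtain ⟨e, heS⟩ := hS
      rw [Zc_dc M heS (hr1 e heS), mul_add]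
      have t1 : 0 ≤ (-1:ℝ)^(s+1) * Zc M (S.erase e) v (s+1) :=
        ih _ (Finset.erase_ssubset heS) M v (fun x hx => hl x (Finset.mem_of_mem_erase hx))
          (fun x hx => hnl x (Finset.mem_of_mem_erase hx)) _
      have t2 : 0 ≤ (-1:ℝ)^(s+1) * (v e * Zc (contract M e) (S.erase e) v s) := by
        have hZ : 0 ≤ (-1:ℝ)^s * Zc (contract M e) (S.erase e) v s := by
          refine ih _ (Finset.erase_ssubset heS) (contract M e) v ?_ ?_ _
          · intro x hx h0
            exfalso
            rw [contract_r M (hr1 e heS)] at h0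
            have hxS := Finset.mem_of_mem_erase hx
            have hxe : e ≠ x := fun h => (Finset.mem_erase.mp hx).1 h.symm
            have hge : 1 ≤ M.r (insert e ({x}:Finset α)) := by
              have := M.mono (Finset.singleton_subset_iff.mpr
                (Finset.mem_insert_self e ({x}:Finset α)))
              rw [hr1 e heS] at this; exact this
            exact hpar e heS x hxS hxe (by omega)
          · intro x hx _
            exact hnl x (Finset.mem_of_mem_erase hx)
              (by rw [hr1 x (Finset.mem_of_mem_erase hx)]; omega)
        have hve := (hnl e heS (by rw [hr1 e heS]; omega)).2
        have hrw : (-1:ℝ)^(s+1) * (v e * Zc (contract M e) (S.erase e) v s)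
            = (-v e) * ((-1)^s * Zc (contract M e) (S.erase e) v s) := by
          rw [pow_succ]; ring
        rw [hrw]
        exact mul_nonneg (by linarith) hZ
      linarith

lemma core_strict (S : Finset α) : ∀ (M : RankMatroid α) (v : α → ℝ),
    (∀ e ∈ S, M.r {e} = 0 → -1 < v e) →
    (∀ e ∈ S, M.r {e} ≠ 0 → -2 < v e ∧ v e < 0) →
    ∀ s : ℕ, s ≤ M.r S → 0 < (-1 : ℝ) ^ s * Zc M S v s := by
  induction S using Finset.strongInduction with
  | _ S ih =>
  intro M v hl hnl s hsle
  cases s with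
  | zero =>
    rw [pow_zero, one_mul, Zc_zero]
    refine Finset.prod_pos (fun e heL => ?_)
    rw [Finset.mem_filter] at heL
    have := hl e heL.1 heL.2
    linarith
  | succ s =>
    rcases Finset.eq_empty_or_nonempty S with rfl | hS
    · rw [r_empty] at hsle; omega
    by_cases hloop : ∃ e ∈ S, M.r {e} = 0
    · obtain ⟨e, heS, he0⟩ := hloop
      rw [Zc_loop M heS he0, mul_left_comm]
      have h1 : (0:ℝ) < 1 + v e := by have := hl e heS he0; linarith
      refine mul_pos h1 (ih _ (Finset.erase_ssubset heS) M v ?_ ?_ _ ?_)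
      · exact fun x hx => hl x (Finset.mem_of_mem_erase hx)
      · exact fun x hx => hnl x (Finset.mem_of_mem_erase hx)
      · rw [r_erase_loop M heS he0]; exact hsle
    push_neg at hloop
    have hr1 : ∀ e ∈ S, M.r {e} = 1 := fun e heS => by
      have h := r_singleton_le M e; have h2 := hloop e heS; omega
    by_cases hpar : ∃ e ∈ S, ∃ f ∈ S, e ≠ f ∧ M.r ({e, f} : Finset α) = 1
    · obtain ⟨e, heS, f, hfS, hef, hp⟩ := hpar
      rw [Zc_merge M heS hfS hef (hr1 e heS) (hr1 f hfS) hp]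
      refine ih _ (Finset.erase_ssubset hfS) M _ ?_ ?_ _ ?_
      · intro x hx h0
        exact absurd h0 (hloop x (Finset.mem_of_mem_erase hx))
      · intro x hx _
        by_cases hxe : x = e
        · subst hxe
          rw [Function.update_self]
          obtain ⟨ha, hb⟩ := hnl x (Finset.mem_of_mem_erase hx)
            (by rw [hr1 x (Finset.mem_of_mem_erase hx)]; omega)
          obtain ⟨hc, hd⟩ := hnl f hfS (by rw [hr1 f hfS]; omega)
          constructor <;> nlinarith
        · rw [Function.update_of_ne hxe]
          exact hnl x (Finset.mem_of_mem_erase hx)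
            (by rw [hr1 x (Finset.mem_of_mem_erase hx)]; omega)
      · rw [r_erase_parallel M heS hfS hef (hr1 e heS) hp]; exact hsle
    · push_neg at hpar
      obtain ⟨e, heS⟩ := hS
      rw [Zc_dc M heS (hr1 e heS), mul_add]
      have t1 : 0 ≤ (-1:ℝ)^(s+1) * Zc M (S.erase e) v (s+1) :=
        core_nonneg _ M v (fun x hx h0 => le_of_lt (hl x (Finset.mem_of_mem_erase hx) h0))
          (fun x hx h0 => ⟨le_of_lt (hnl x (Finset.mem_of_mem_erase hx) h0).1,
            le_of_lt (hnl x (Finset.mem_of_mem_erase hx) h0).2⟩) _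
      have t2 : 0 < (-1:ℝ)^(s+1) * (v e * Zc (contract M e) (S.erase e) v s) := by
        have hZ : 0 < (-1:ℝ)^s * Zc (contract M e) (S.erase e) v s := by
          refine ih _ (Finset.erase_ssubset heS) (contract M e) v ?_ ?_ _ ?_
          · intro x hx h0
            exfalso
            rw [contract_r M (hr1 e heS)] at h0
            have hxS := Finset.mem_of_mem_erase hx
            have hxe : e ≠ x := fun h => (Finset.mem_erase.mp hx).1 h.symm
            have hge : 1 ≤ M.r (insert e ({x}:Finset α)) := by
              have := M.mono (Finset.singleton_subset_iff.mpr
                (Finset.mem_insert_self e ({x}:Finset α)))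
              rw [hr1 e heS] at this; exact this
            exact hpar e heS x hxS hxe (by omega)
          · intro x hx _
            exact hnl x (Finset.mem_of_mem_erase hx)
              (by rw [hr1 x (Finset.mem_of_mem_erase hx)]; omega)
          · rw [contract_r_erase M heS (hr1 e heS)]; omega
        have hve := (hnl e heS (by rw [hr1 e heS]; omega)).2
        have hrw : (-1:ℝ)^(s+1) * (v e * Zc (contract M e) (S.erase e) v s)
            = (-v e) * ((-1)^s * Zc (contract M e) (S.erase e) v s) := by
          rw [pow_succ]; ring
        rw [hrw]
        exact mul_pos (by linarith) hZ
      linarith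

end TutteAux

/-- For a matroid `M` with `v_e ≥ -1` on loops and `-2 ≤ v_e ≤ 0` on non-loops:
(a) `(-1)^s C̃_M^{[s]}(v) ≥ 0` for `0 ≤ s ≤ r(M)`, with
`C̃_M^{[0]}(v) = ∏_{loops e} (1 + v_e)`;
(b) `Z̃_M(q,v) ≥ 0` for all `q < 0`, strictly iff every loop has `v_e > -1`.
Moreover under strict hypotheses all the coefficient inequalities are strict. -/



theorem matCoeff_alternating_and_matZ_nonneg {α : Type*} [DecidableEq α] [Fintype α]
    (M : RankMatroid α) (v : α → ℝ)
    (hloop : ∀ e : α, M.r {e} = 0 → -1 ≤ v e)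
    (hnonloop : ∀ e : α, M.r {e} ≠ 0 → -2 ≤ v e ∧ v e ≤ 0) :
    (∀ s : ℕ, s ≤ M.r Finset.univ → 0 ≤ (-1 : ℝ) ^ s * matCoeff M s v) ∧
    matCoeff M 0 v = ∏ e ∈ Finset.univ.filter (fun e : α => M.r {e} = 0), (1 + v e) ∧
    (∀ q : ℝ, q < 0 → 0 ≤ matZ M q v) ∧
    (∀ q : ℝ, q < 0 → (0 < matZ M q v ↔ ∀ e : α, M.r {e} = 0 → -1 < v e)) ∧
    ((∀ e : α, M.r {e} = 0 → -1 < v e) → (∀ e : α, M.r {e} ≠ 0 → -2 < v e ∧ v e < 0) →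
      ∀ s : ℕ, s ≤ M.r Finset.univ → 0 < (-1 : ℝ) ^ s * matCoeff M s v) := by
  classical
  have hCZ : ∀ s : ℕ, matCoeff M s v = TutteAux.Zc M Finset.univ v s := fun s => rfl
  have ha : ∀ s : ℕ, 0 ≤ (-1:ℝ)^s * matCoeff M s v := by
    intro s
    rw [hCZ]
    exact TutteAux.core_nonneg Finset.univ M v (fun e _ h => hloop e h)
      (fun e _ h => hnonloop e h) s
  have hC0 : matCoeff M 0 v
      = ∏ e ∈ Finset.univ.filter (fun e : α => M.r {e} = 0), (1 + v e) := by
    rw [hCZ, TutteAux.Zc_zero]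
  have hmatZ : ∀ q : ℝ, matZ M q v = ∑ s ∈ Finset.range (M.r Finset.univ + 1),
      q ^ (-(s:ℤ)) * matCoeff M s v := by
    intro q
    rw [matZ]
    rw [← Finset.sum_fiberwise_of_maps_to (g := fun A => M.r A)
      (t := Finset.range (M.r Finset.univ + 1))
      (fun A _ => Finset.mem_range.mpr (Nat.lt_succ_of_le (M.mono (Finset.subset_univ A)))) _]
    refine Finset.sum_congr rfl (fun s _ => ?_)
    rw [matCoeff, Finset.mul_sum]
    refine Finset.sum_congr rfl (fun A hA => ?_)
    rw [Finset.mem_filter] at hA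
    rw [hA.2]
  have hkey : ∀ q : ℝ, q < 0 → ∀ s : ℕ, q ^ (-(s:ℤ)) = ((-q)^s)⁻¹ * (-1:ℝ)^s := by
    intro q hq s
    rw [zpow_neg, zpow_natCast]
    have hpow : (q:ℝ)^s = (-1:ℝ)^s * (-q)^s := by
      rw [neg_pow q, ← mul_assoc, ← mul_pow]
      norm_num
    have hinv : ((-1:ℝ)^s)⁻¹ = (-1:ℝ)^s := by
      rcases Nat.even_or_odd s with h | h
      · rw [h.neg_one_pow]; norm_num
      · rw [h.neg_one_pow]; norm_num
    rw [hpow, mul_inv, hinv, mul_comm]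
  have hterm : ∀ q : ℝ, q < 0 → ∀ s : ℕ, 0 ≤ q ^ (-(s:ℤ)) * matCoeff M s v := by
    intro q hq s
    rw [hkey q hq s, mul_assoc]
    have hp : (0:ℝ) < ((-q)^s)⁻¹ := inv_pos.mpr (pow_pos (by linarith) s)
    exact mul_nonneg hp.le (ha s)
  have hb : ∀ q : ℝ, q < 0 → 0 ≤ matZ M q v := by
    intro q hq
    rw [hmatZ q]
    exact Finset.sum_nonneg (fun s _ => hterm q hq s)
  refine ⟨fun s _ => ha s, hC0, hb, ?_, ?_⟩
  · intro q hq
    constructor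
    · intro hpos e he0
      by_contra hlt
      push_neg at hlt
      have hve : v e = -1 := le_antisymm hlt (hloop e he0)
      have hz : matZ M q v = 0 := by
        rw [hmatZ q]
        refine Finset.sum_eq_zero (fun s _ => ?_)
        have hc : matCoeff M s v = 0 := by
          rw [hCZ, TutteAux.Zc_loop M (Finset.mem_univ e) he0, hve]
          norm_num
        rw [hc, mul_zero]
      rw [hz] at hpos; exact lt_irrefl 0 hpos
    · intro hstrict
      rw [hmatZ q]
      refine Finset.sum_pos' (fun s _ => hterm q hq s)
        ⟨0, Finset.mem_range.mpr (Nat.succ_pos _), ?_⟩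
      simp only [Nat.cast_zero, neg_zero, zpow_zero, one_mul]
      rw [hC0]
      refine Finset.prod_pos (fun e heL => ?_)
      rw [Finset.mem_filter] at heL
      have := hstrict e heL.2
      linarith
  · intro h1 h2 s hs
    rw [hCZ]
    exact TutteAux.core_strict Finset.univ M v (fun e _ h => h1 e h)
      (fun e _ h => h2 e h) s hs
end

section
/- Let M be a matroid with finite ground set E and rank function r, let e₁,…,e_ℓ ∈ E be distinct elements whose set S = {e₁,…,e_ℓ} has rank ρ = r(S), and let v : E → ℝ satisfy: −2 ≤ v_e ≤ 0 for all e ∈ E∖S that are not spanned by S, and v_e ≥ −1 for all e ∈ E∖S that are spanned by S (here e is spanned by S means r(S ∪ {e}) = r(S)). Then for every 0 ≤ s ≤ r(E), the mixed partial derivative of order ℓ of the function v ↦ C̃_M^{[s]}(v) with respect to the coordinates v_{e₁},…,v_{e_ℓ}, evaluated at v, satisfies (−1)^{s+ρ} · ∂^ℓ C̃_M^{[s]}(v)/∂v_{e₁}⋯∂v_{e_ℓ} ≥ 0. -/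
open Finset

set_option linter.unusedSectionVars false

section CoreAux

set_option linter.unusedSectionVars false


variable {α : Type*} [DecidableEq α]

noncomputable def cfSum (r : Finset α → ℕ) (U : Finset α) (k : ℕ) (v : α → ℝ) : ℝ :=
  ∑ A ∈ U.powerset.filter (fun A => r A = k), ∏ a ∈ A, v a

lemma cfSum_eq (r : Finset α → ℕ) (U : Finset α) (k : ℕ) (v : α → ℝ) :
    cfSum r U k v = ∑ A ∈ U.powerset, if r A = k then ∏ a ∈ A, v a else 0 := by
  rw [cfSum, Finset.sum_filter]

section rk
variable {r : Finset α → ℕ} (hcard : ∀ A : Finset α, r A ≤ A.card)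
  (hmono : ∀ ⦃A B : Finset α⦄, A ⊆ B → r A ≤ r B)
  (hsub : ∀ A B : Finset α, r (A ∪ B) + r (A ∩ B) ≤ r A + r B)

include hcard in
lemma r_empty : r ∅ = 0 := Nat.le_zero.mp (by simpa using hcard ∅)

include hmono hsub in
lemma r_loop_insert {t : α} (ht : r {t} = 0) (B : Finset α) : r (insert t B) = r B := by
  have h := hsub B {t}
  have h2 : B ∪ {t} = insert t B := by
    rw [Finset.union_comm, ← Finset.insert_eq]
  rw [h2, ht] at h
  have h3 : r B ≤ r (insert t B) := hmono (Finset.subset_insert _ _)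
  omega

include hmono hsub in
lemma r_parallel_insert {e f : α} (hef : r {e, f} = 1) (hre : r {e} = 1)
    {A : Finset α} (he : e ∈ A) : r (insert f A) = r A := by
  have h := hsub A {e, f}
  have h1 : r {e} ≤ r (A ∩ {e, f}) := hmono (by
    intro x hx; simp only [Finset.mem_singleton] at hx; subst hx
    exact Finset.mem_inter.mpr ⟨he, by simp⟩)
  rw [hre] at h1
  have h2 : r (insert f A) ≤ r (A ∪ {e, f}) := hmono (by
    intro x hx
    rcases Finset.mem_insert.mp hx with h | h
    · exact Finset.mem_union_right _ (by simp [h])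
    · exact Finset.mem_union_left _ h)
  have h3 : r A ≤ r (insert f A) := hmono (Finset.subset_insert _ _)
  rw [hef] at h
  omega

include hcard hsub in
lemma r_insert_le (a : α) (X : Finset α) : r (insert a X) ≤ r X + 1 := by
  have h := hsub X {a}
  have h2 : X ∪ {a} = insert a X := by rw [Finset.union_comm, ← Finset.insert_eq]
  have h3 : r {a} ≤ 1 := by simpa using hcard {a}
  rw [h2] at h
  omega

include hcard hsub in
lemma r_union_le (X B : Finset α) : r (X ∪ B) ≤ r X + B.card := by
  classical
  induction B using Finset.induction_on with
  | empty => simp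
  | insert a B hx ih =>
    rw [Finset.union_insert]
    have h1 := r_insert_le hcard hsub a (X ∪ B)
    have h2 := Finset.card_insert_of_notMem hx
    omega

include hcard hmono hsub in
lemma loop_key {t : α} {W : Finset α} (htW : t ∉ W) (ht0 : r {t} = 0) (k : ℕ) (v : α → ℝ) :
    cfSum r (insert t W) k v = (1 + v t) * cfSum r W k v := by
  rw [cfSum_eq, Finset.sum_powerset_insert htW]
  have h1 : ∀ B ∈ W.powerset,
      (if r (insert t B) = k then ∏ a ∈ insert t B, v a else 0)
      = v t * (if r B = k then ∏ a ∈ B, v a else 0) := by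
    intro B hB
    have htB : t ∉ B := fun h => htW (Finset.mem_powerset.mp hB h)
    rw [r_loop_insert hmono hsub ht0 B, Finset.prod_insert htB]
    split_ifs <;> ring
  rw [Finset.sum_congr rfl h1, ← Finset.mul_sum, ← cfSum_eq]
  ring

include hmono hsub in
lemma parallel_key {e f : α} {W : Finset α} (heW : e ∉ W) (hfW : f ∉ insert e W)
    (hef : e ≠ f) (hre : r {e} = 1) (hrf : r {f} = 1) (hr1 : r {e, f} = 1)
    (k : ℕ) (v : α → ℝ) :
    cfSum r (insert f (insert e W)) k v
      = cfSum r (insert e W) k (Function.update v e (v e + v f + v e * v f)) := by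
  set c : ℝ := v e + v f + v e * v f with hc
  set v' : α → ℝ := Function.update v e c with hv'
  rw [cfSum_eq, cfSum_eq, Finset.sum_powerset_insert hfW,
    Finset.sum_powerset_insert heW, Finset.sum_powerset_insert heW,
    Finset.sum_powerset_insert heW]
  rw [← Finset.sum_add_distrib, ← Finset.sum_add_distrib, ← Finset.sum_add_distrib,
    ← Finset.sum_add_distrib]
  apply Finset.sum_congr rfl
  intro B hB
  have hBW : B ⊆ W := Finset.mem_powerset.mp hB
  have heB : e ∉ B := fun h => heW (hBW h)
  have hfB : f ∉ B := fun h => hfW (Finset.mem_insert_of_mem (hBW h))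
  have hfeB : f ∉ insert e B := by
    intro h
    rcases Finset.mem_insert.mp h with h | h
    · exact hef h.symm
    · exact hfB h
  have hrfe : r (insert f (insert e B)) = r (insert e B) :=
    r_parallel_insert hmono hsub hr1 hre (Finset.mem_insert_self e B)
  have hrff : r (insert f B) = r (insert e B) := by
    have h1 : r (insert e (insert f B)) = r (insert f B) :=
      r_parallel_insert hmono hsub (by rwa [Finset.pair_comm]) hrf
        (Finset.mem_insert_self f B)
    rw [Finset.insert_comm, hrfe] at h1
    omega
  have hpB : ∏ a ∈ B, v' a = ∏ a ∈ B, v a :=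
    Finset.prod_congr rfl fun a ha =>
      Function.update_of_ne (by rintro rfl; exact heB ha) _ _
  have hpeB : ∏ a ∈ insert e B, v' a = c * ∏ a ∈ B, v a := by
    rw [Finset.prod_insert heB, hpB, hv', Function.update_self]
  rw [Finset.prod_insert heB, Finset.prod_insert hfB, Finset.prod_insert hfeB,
    Finset.prod_insert heB, hpeB, hpB, hrfe, hrff]
  split_ifs <;> (try simp only [hc]) <;> ring

include hmono in
lemma delcon_key {t : α} {W : Finset α} (htW : t ∉ W) (ht1 : r {t} = 1)
    (k' : ℕ) (v : α → ℝ) :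
    cfSum r (insert t W) (k' + 1) v
      = cfSum r W (k' + 1) v + v t * cfSum (fun B => r (insert t B) - 1) W k' v := by
  have h1r : ∀ B : Finset α, 1 ≤ r (insert t B) := by
    intro B
    have := hmono (Finset.singleton_subset_iff.mpr (Finset.mem_insert_self t B))
    rw [ht1] at this
    exact this
  rw [cfSum_eq, Finset.sum_powerset_insert htW, ← cfSum_eq]
  congr 1
  rw [cfSum_eq, Finset.mul_sum]
  apply Finset.sum_congr rfl
  intro B hB
  have htB : t ∉ B := fun h => htW (Finset.mem_powerset.mp hB h)
  have hiff : r (insert t B) = k' + 1 ↔ r (insert t B) - 1 = k' := by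
    have := h1r B
    omega
  rw [Finset.prod_insert htB]
  by_cases h : r (insert t B) = k' + 1
  · rw [if_pos h, if_pos (hiff.mp h)]
  · rw [if_neg h, if_neg (fun hh => h (hiff.mpr hh)), mul_zero]

end rk

theorem core_sign (n : ℕ) : ∀ (U : Finset α), U.card ≤ n → ∀ (r : Finset α → ℕ),
    (∀ A : Finset α, r A ≤ A.card) → (∀ ⦃A B : Finset α⦄, A ⊆ B → r A ≤ r B) →
    (∀ A B : Finset α, r (A ∪ B) + r (A ∩ B) ≤ r A + r B) →
    ∀ (v : α → ℝ), (∀ a ∈ U, r {a} = 0 → -1 ≤ v a) →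
    (∀ a ∈ U, r {a} = 1 → -2 ≤ v a ∧ v a ≤ 0) →
    ∀ k : ℕ, 0 ≤ (-1 : ℝ) ^ k * cfSum r U k v := by
  induction n with
  | zero =>
    intro U hU r hcard hmono hsub v hloop hnon k
    have : U = ∅ := Finset.card_eq_zero.mp (Nat.le_zero.mp hU)
    subst this
    rw [cfSum_eq]
    simp only [Finset.powerset_empty, Finset.sum_singleton, Finset.prod_empty,
      r_empty hcard]
    rcases eq_or_ne k 0 with rfl | hk
    · simp
    · rw [if_neg (fun h => hk h.symm)]
      simp
  | succ n ih =>
    intro U hU r hcard hmono hsub v hloop hnon k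
    rcases U.eq_empty_or_nonempty with hUe | hUne
    · subst hUe
      rw [cfSum_eq]
      simp only [Finset.powerset_empty, Finset.sum_singleton, Finset.prod_empty,
        r_empty hcard]
      rcases eq_or_ne k 0 with rfl | hk
      · simp
      · rw [if_neg (fun h => hk h.symm)]
        simp
    by_cases hL : ∃ t ∈ U, r {t} = 0
    · -- loop case
      obtain ⟨t, ht, hrt⟩ := hL
      have htE : t ∉ U.erase t := Finset.notMem_erase _ _
      have hUins : U = insert t (U.erase t) := (Finset.insert_erase ht).symm
      have hcd : (U.erase t).card ≤ n := by
        have := Finset.card_erase_of_mem ht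
        omega
      have hrec := ih (U.erase t) hcd r hcard hmono hsub v
        (fun a ha h0 => hloop a (Finset.mem_of_mem_erase ha) h0)
        (fun a ha h1 => hnon a (Finset.mem_of_mem_erase ha) h1) k
      have hv : 0 ≤ 1 + v t := by linarith [hloop t ht hrt]
      rw [hUins, loop_key hcard hmono hsub htE hrt k v]
      calc (0:ℝ) ≤ (1 + v t) * ((-1) ^ k * cfSum r (U.erase t) k v) :=
        mul_nonneg hv hrec
      _ = (-1) ^ k * ((1 + v t) * cfSum r (U.erase t) k v) := by ring
    · push_neg at hL
      have hone : ∀ a ∈ U, r {a} = 1 := by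
        intro a ha
        have h1 : r {a} ≤ 1 := by simpa using hcard {a}
        have h2 := hL a ha
        omega
      by_cases hk : k = 0
      · subst hk
        have hfil : U.powerset.filter (fun A => r A = 0) = {∅} := by
          apply Finset.eq_singleton_iff_unique_mem.mpr
          constructor
          · simp [Finset.mem_filter, r_empty hcard]
          · intro A hA
            rw [Finset.mem_filter, Finset.mem_powerset] at hA
            by_contra hne
            obtain ⟨a, ha⟩ := Finset.nonempty_iff_ne_empty.mpr hne
            have h1 : r {a} ≤ r A := hmono (Finset.singleton_subset_iff.mpr ha)
            have h2 := hone a (hA.1 ha)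
            omega
        rw [cfSum, hfil]
        simp
      by_cases hP : ∃ x ∈ U, ∃ y ∈ U, x ≠ y ∧ r {x, y} = 1
      · -- parallel case
        obtain ⟨e, he, f, hf, hef, hr1⟩ := hP
        have hre : r {e} = 1 := hone e he
        have hrf : r {f} = 1 := hone f hf
        have hefU : e ∈ U.erase f := Finset.mem_erase.mpr ⟨hef, he⟩
        have heW : e ∉ (U.erase f).erase e := Finset.notMem_erase _ _
        have hUf : U.erase f = insert e ((U.erase f).erase e) :=
          (Finset.insert_erase hefU).symm
        have hfW : f ∉ insert e ((U.erase f).erase e) := by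
          rw [← hUf]; exact Finset.notMem_erase _ _
        have hUins : U = insert f (insert e ((U.erase f).erase e)) := by
          rw [← hUf, Finset.insert_erase hf]
        set v' : α → ℝ := Function.update v e (v e + v f + v e * v f) with hv'
        have hcd : (insert e ((U.erase f).erase e)).card ≤ n := by
          rw [← hUf]
          have := Finset.card_erase_of_mem hf
          omega
        have hbound : -2 ≤ v e + v f + v e * v f ∧ v e + v f + v e * v f ≤ 0 := by
          obtain ⟨h1, h2⟩ := hnon e he hre
          obtain ⟨h3, h4⟩ := hnon f hf hrf
          constructor <;> nlinarith
        have hsubU : insert e ((U.erase f).erase e) ⊆ U := by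
          rw [← hUf]; exact Finset.erase_subset _ _
        have hrec := ih (insert e ((U.erase f).erase e)) hcd r hcard hmono hsub v'
          (fun a ha h0 => absurd (hone a (hsubU ha)) (by omega))
          (fun a ha h1 => by
            by_cases hae : a = e
            · subst hae
              rw [hv', Function.update_self]
              exact hbound
            · rw [hv', Function.update_of_ne hae]
              exact hnon a (hsubU ha) h1) k
        rw [hUins, parallel_key hmono hsub heW hfW hef hre hrf hr1 k v]
        exact hrec
      · -- deletion-contraction case
        push_neg at hP
        have hpar : ∀ a ∈ U, ∀ b ∈ U, a ≠ b → r {a, b} = 2 := by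
          intro a ha b hb hab
          have hc2 : ({a, b} : Finset α).card ≤ 2 := by
            have := Finset.card_insert_le a ({b} : Finset α)
            simpa using this
          have h1 : r {a, b} ≤ 2 := le_trans (hcard _) hc2
          have h2 : r {a} ≤ r {a, b} := hmono (by simp)
          have h3 := hone a ha
          have h4 := hP a ha b hb hab
          omega
        obtain ⟨t, ht⟩ := hUne
        obtain ⟨k', rfl⟩ := Nat.exists_eq_succ_of_ne_zero hk
        have htE : t ∉ U.erase t := Finset.notMem_erase _ _
        have hUins : U = insert t (U.erase t) := (Finset.insert_erase ht).symm
        set r' : Finset α → ℕ := fun B => r (insert t B) - 1 with hr'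
        have h1r : ∀ B : Finset α, 1 ≤ r (insert t B) := by
          intro B
          have := hmono (Finset.singleton_subset_iff.mpr (Finset.mem_insert_self t B))
          rw [hone t ht] at this
          exact this
        have hcd : (U.erase t).card ≤ n := by
          have := Finset.card_erase_of_mem ht
          omega
        have hdel := ih (U.erase t) hcd r hcard hmono hsub v
          (fun a ha h0 => hloop a (Finset.mem_of_mem_erase ha) h0)
          (fun a ha h1 => hnon a (Finset.mem_of_mem_erase ha) h1) (k' + 1)
        have hcard' : ∀ A : Finset α, r' A ≤ A.card := by
          intro A
          have h1 := hcard (insert t A)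
          have h2 := Finset.card_insert_le t A
          simp only [hr']
          omega
        have hmono' : ∀ ⦃A B : Finset α⦄, A ⊆ B → r' A ≤ r' B := by
          intro A B hAB
          have := hmono (Finset.insert_subset_insert t hAB)
          simp only [hr']
          omega
        have hsub' : ∀ A B : Finset α, r' (A ∪ B) + r' (A ∩ B) ≤ r' A + r' B := by
          intro A B
          have h := hsub (insert t A) (insert t B)
          have hu : insert t A ∪ insert t B = insert t (A ∪ B) := by
            ext x
            simp only [Finset.mem_insert, Finset.mem_union]
            tauto
          have hi : insert t A ∩ insert t B = insert t (A ∩ B) :=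
            (Finset.insert_inter_distrib A B t).symm
          rw [hu, hi] at h
          have h1 := h1r (A ∪ B)
          have h2 := h1r (A ∩ B)
          have h3 := h1r A
          have h4 := h1r B
          simp only [hr']
          omega
        have hcon := ih (U.erase t) hcd r' hcard' hmono' hsub' v
          (fun a ha h0 => by
            exfalso
            have haU := Finset.mem_of_mem_erase ha
            have hat : t ≠ a := fun h => (Finset.mem_erase.mp ha).1 h.symm
            have hp := hpar t ht a haU hat
            simp only [hr'] at h0
            have h2 : insert t {a} = ({t, a} : Finset α) := rfl
            rw [h2, hp] at h0
            omega)
          (fun a ha h1 =>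
            hnon a (Finset.mem_of_mem_erase ha) (hone a (Finset.mem_of_mem_erase ha))) k'
        have hvt : v t ≤ 0 := (hnon t ht (hone t ht)).2
        rw [hUins, delcon_key hmono htE (hone t ht) k' v]
        have h2 : 0 ≤ (-v t) * ((-1 : ℝ)^k' * cfSum r' (U.erase t) k' v) :=
          mul_nonneg (neg_nonneg.mpr hvt) hcon
        have hgoal : (-1 : ℝ)^(k' + 1) *
            (cfSum r (U.erase t) (k' + 1) v + v t * cfSum r' (U.erase t) k' v)
            = (-1)^(k' + 1) * cfSum r (U.erase t) (k' + 1) v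
              + (-v t) * ((-1)^k' * cfSum r' (U.erase t) k' v) := by
          rw [pow_succ]
          ring
        rw [hgoal]
        exact add_nonneg hdel h2

end CoreAux

section DerivAux
variable {α : Type*} [DecidableEq α] [Fintype α]



lemma contDiff_prodfun (A : Finset α) (n : WithTop ℕ∞) :
    ContDiff ℝ n (fun w : α → ℝ => ∏ a ∈ A, w a) :=
  contDiff_prod fun i _ => (ContinuousLinearMap.proj i : (α → ℝ) →L[ℝ] ℝ).contDiff

lemma fderiv_prod_single (A : Finset α) (v : α → ℝ) (c : α) :
    fderiv ℝ (fun w : α → ℝ => ∏ a ∈ A, w a) v (Pi.single c (1 : ℝ))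
      = if c ∈ A then ∏ a ∈ A.erase c, v a else 0 := by
  have hg : ∀ i ∈ A, DifferentiableAt ℝ (fun w : α → ℝ => w i) v := fun i _ =>
    (ContinuousLinearMap.proj i : (α → ℝ) →L[ℝ] ℝ).differentiableAt
  rw [fderiv_finset_prod hg]
  rw [ContinuousLinearMap.sum_apply]
  have h1 : ∀ i ∈ A, ((∏ j ∈ A.erase i, v j) • fderiv ℝ (fun w : α → ℝ => w i) v)
      (Pi.single c (1:ℝ)) = if i = c then ∏ j ∈ A.erase i, v j else 0 := by
    intro i _
    rw [ContinuousLinearMap.smul_apply]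
    have : fderiv ℝ (fun w : α → ℝ => w i) v
        = (ContinuousLinearMap.proj i : (α → ℝ) →L[ℝ] ℝ) :=
      (ContinuousLinearMap.proj i : (α → ℝ) →L[ℝ] ℝ).fderiv
    rw [this]
    simp [ContinuousLinearMap.proj_apply, Pi.single_apply]
  rw [Finset.sum_congr rfl h1, Finset.sum_ite_eq' A c (fun i => ∏ j ∈ A.erase i, v j)]

lemma iter_prod_single (ℓ : ℕ) : ∀ (A : Finset α) (e : Fin ℓ → α), Function.Injective e →
    ∀ v : α → ℝ,
    iteratedFDeriv ℝ ℓ (fun w : α → ℝ => ∏ a ∈ A, w a) v (fun i => Pi.single (e i) (1:ℝ))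
      = if ∀ i, e i ∈ A then ∏ a ∈ A \ Finset.image e Finset.univ, v a else 0 := by
  induction ℓ with
  | zero =>
    intro A e he v
    rw [iteratedFDeriv_zero_apply]
    simp
  | succ ℓ ih =>
    intro A e he v
    set c := e (Fin.last ℓ) with hcdef
    set m : Fin (ℓ + 1) → (α → ℝ) := fun i => Pi.single (e i) (1:ℝ) with hm
    have step : iteratedFDeriv ℝ (ℓ + 1) (fun w : α → ℝ => ∏ a ∈ A, w a) v m
        = iteratedFDeriv ℝ ℓ
            (fun y => fderiv ℝ (fun w : α → ℝ => ∏ a ∈ A, w a) y (Pi.single c (1:ℝ)))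
            v (Fin.init m) := by
      rw [iteratedFDeriv_succ_apply_right]
      have hsm : ContDiff ℝ ((⊤ : ℕ∞) : WithTop ℕ∞)
          (fun y => fderiv ℝ (fun w : α → ℝ => ∏ a ∈ A, w a) y) :=
        (contDiff_prodfun A ((⊤:ℕ∞) : WithTop ℕ∞)).fderiv_right (by exact_mod_cast le_top)
      have hcomp := (ContinuousLinearMap.apply ℝ ℝ (Pi.single c (1:ℝ))).iteratedFDeriv_comp_left
        (f := fun y => fderiv ℝ (fun w : α → ℝ => ∏ a ∈ A, w a) y)
        hsm.contDiffAt (x := v) (i := ℓ) (by exact_mod_cast le_top)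
      have : (ContinuousLinearMap.apply ℝ ℝ (Pi.single c (1:ℝ))) ∘
          (fun y => fderiv ℝ (fun w : α → ℝ => ∏ a ∈ A, w a) y)
          = fun y => fderiv ℝ (fun w : α → ℝ => ∏ a ∈ A, w a) y (Pi.single c (1:ℝ)) := rfl
      rw [this] at hcomp
      rw [hcomp]
      rfl
    rw [step]
    have hinit : Fin.init m = fun i : Fin ℓ => Pi.single (e i.castSucc) (1:ℝ) := rfl
    by_cases hcA : c ∈ A
    · have hfd : (fun y => fderiv ℝ (fun w : α → ℝ => ∏ a ∈ A, w a) y (Pi.single c (1:ℝ)))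
          = fun y : α → ℝ => ∏ a ∈ A.erase c, y a := by
        funext y
        rw [fderiv_prod_single A y c, if_pos hcA]
      rw [hfd]
      have he' : Function.Injective (fun i : Fin ℓ => e i.castSucc) :=
        fun i j h => Fin.castSucc_injective ℓ (he h)
      rw [hinit, ih (A.erase c) (fun i : Fin ℓ => e i.castSucc) he' v]
      have hne : ∀ i : Fin ℓ, e i.castSucc ≠ c := fun i h =>
        (Fin.castSucc_lt_last i).ne (he h)
      have hcond : (∀ i : Fin ℓ, e i.castSucc ∈ A.erase c) ↔ (∀ i : Fin (ℓ+1), e i ∈ A) := by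
        constructor
        · intro h i
          rcases Fin.eq_castSucc_or_eq_last i with ⟨j, rfl⟩ | rfl
          · exact Finset.mem_of_mem_erase (h j)
          · exact hcA
        · intro h i
          exact Finset.mem_erase.mpr ⟨hne i, h i.castSucc⟩
      have hset : A.erase c \ Finset.image (fun i : Fin ℓ => e i.castSucc) Finset.univ
          = A \ Finset.image e Finset.univ := by
        ext a
        simp only [Finset.mem_sdiff, Finset.mem_erase, Finset.mem_image,
          Finset.mem_univ, true_and]
        constructor
        · rintro ⟨⟨hac, haA⟩, hni⟩
          refine ⟨haA, ?_⟩
          rintro ⟨i, rfl⟩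
          rcases Fin.eq_castSucc_or_eq_last i with ⟨j, rfl⟩ | rfl
          · exact hni ⟨j, rfl⟩
          · exact hac rfl
        · rintro ⟨haA, hni⟩
          refine ⟨⟨fun h => hni ⟨Fin.last ℓ, h.symm⟩, haA⟩, ?_⟩
          rintro ⟨i, rfl⟩
          exact hni ⟨i.castSucc, rfl⟩
      rw [hset]
      by_cases hall : ∀ i : Fin (ℓ+1), e i ∈ A
      · rw [if_pos (hcond.mpr hall), if_pos hall]
      · rw [if_neg (fun h => hall (hcond.mp h)), if_neg hall]
    · have hfd : (fun y => fderiv ℝ (fun w : α → ℝ => ∏ a ∈ A, w a) y (Pi.single c (1:ℝ)))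
          = fun _ : α → ℝ => (0:ℝ) := by
        funext y
        rw [fderiv_prod_single A y c, if_neg hcA]
      rw [hfd, iteratedFDeriv_zero_fun]
      have hnall : ¬ ∀ i : Fin (ℓ+1), e i ∈ A := fun h => hcA (h (Fin.last ℓ))
      rw [if_neg hnall]
      simp

end DerivAux

/-- Let `e₁, …, e_ℓ` be distinct elements of a matroid `M`, forming a set `S` of rank `ρ`.
Suppose `-2 ≤ v_a ≤ 0` for all elements `a ∉ S` not spanned by `S`, and `v_a ≥ -1` for
all `a ∉ S` spanned by `S` (i.e. with `r(S ∪ {a}) = r(S)`).  Then for every `0 ≤ s ≤ r(E)`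
the mixed partial derivative satisfies
`(-1)^{s+ρ} ∂^ℓ C̃_M^{[s]}(v) / ∂v_{e₁} ⋯ ∂v_{e_ℓ} ≥ 0`. -/
theorem matCoeff_mixed_partials_sign {α : Type*} [DecidableEq α] [Fintype α]
    (M : RankMatroid α) (ℓ : ℕ) (e : Fin ℓ → α) (he : Function.Injective e)
    (S : Finset α) (hS : S = Finset.image e Finset.univ)
    (ρ : ℕ) (hρ : ρ = M.r S) (v : α → ℝ)
    (hnotspanned : ∀ a : α, a ∉ S → M.r (insert a S) ≠ M.r S → -2 ≤ v a ∧ v a ≤ 0)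
    (hspanned : ∀ a : α, a ∉ S → M.r (insert a S) = M.r S → -1 ≤ v a)
    (s : ℕ) (hs : s ≤ M.r Finset.univ) :
    0 ≤ (-1 : ℝ) ^ (s + ρ) *
      iteratedFDeriv ℝ ℓ (fun w : α → ℝ => matCoeff M s w) v
        (fun i : Fin ℓ => Pi.single (e i) (1 : ℝ)) := by
  classical
  set F : Finset (Finset α) :=
    (Finset.univ : Finset α).powerset.filter (fun A => M.r A = s) with hF
  -- Step 1: the iterated derivative is the explicit sum
  have hD : iteratedFDeriv ℝ ℓ (fun w : α → ℝ => matCoeff M s w) v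
        (fun i : Fin ℓ => Pi.single (e i) (1 : ℝ))
      = ∑ A ∈ F, if ∀ i, e i ∈ A then ∏ a ∈ A \ S, v a else 0 := by
    have hfun : (fun w : α → ℝ => matCoeff M s w)
        = (fun w => ∑ A ∈ F, (fun (A : Finset α) (w : α → ℝ) => ∏ a ∈ A, w a) A w) := rfl
    rw [hfun, iteratedFDeriv_sum (fun A _ => contDiff_prodfun A ℓ), Finset.sum_apply,
      ContinuousMultilinearMap.sum_apply]
    apply Finset.sum_congr rfl
    intro A _
    rw [iter_prod_single ℓ A e he v, hS]
  rw [hD]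
  -- Step 2: handle the case s < ρ
  by_cases hsρ : s < ρ
  · have hzero : ∀ A ∈ F, (if ∀ i, e i ∈ A then ∏ a ∈ A \ S, v a else 0) = 0 := by
      intro A hA
      rw [if_neg]
      intro hall
      have hSA : S ⊆ A := by
        rw [hS]
        intro x hx
        obtain ⟨i, _, rfl⟩ := Finset.mem_image.mp hx
        exact hall i
      have h1 : M.r S ≤ M.r A := M.mono hSA
      rw [hF, Finset.mem_filter] at hA
      omega
    rw [Finset.sum_eq_zero hzero, mul_zero]
  push_neg at hsρ
  -- Step 3: rewrite the sum as cfSum of the contraction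
  set r' : Finset α → ℕ := fun B => M.r (S ∪ B) - ρ with hr'
  have hρle : ∀ B : Finset α, ρ ≤ M.r (S ∪ B) := fun B => by
    rw [hρ]; exact M.mono Finset.subset_union_left
  have hcond : ∀ A : Finset α, (∀ i, e i ∈ A) ↔ S ⊆ A := by
    intro A
    constructor
    · intro hall
      rw [hS]
      intro x hx
      obtain ⟨i, _, rfl⟩ := Finset.mem_image.mp hx
      exact hall i
    · intro hSA i
      apply hSA
      rw [hS]
      exact Finset.mem_image.mpr ⟨i, Finset.mem_univ i, rfl⟩
  have hsum2 : (∑ A ∈ F, if ∀ i, e i ∈ A then ∏ a ∈ A \ S, v a else 0)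
      = cfSum r' (Finset.univ \ S) (s - ρ) v := by
    have e1 : (∑ A ∈ F.filter (fun A => S ⊆ A), ∏ a ∈ A \ S, v a)
        = ∑ A ∈ F, if ∀ i, e i ∈ A then ∏ a ∈ A \ S, v a else 0 := by
      rw [Finset.sum_filter]
      apply Finset.sum_congr rfl
      intro A _
      by_cases h : S ⊆ A
      · rw [if_pos ((hcond A).mpr h), if_pos h]
      · rw [if_neg (fun hh => h ((hcond A).mp hh)), if_neg h]
    rw [← e1, cfSum]
    apply Finset.sum_nbij' (fun A => A \ S) (fun B => S ∪ B)
    · intro A hA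
      rw [hF, Finset.filter_filter, Finset.mem_filter, Finset.mem_powerset] at hA
      obtain ⟨_, hrA, hSA⟩ := hA
      rw [Finset.mem_filter, Finset.mem_powerset]
      constructor
      · exact Finset.sdiff_subset_sdiff (Finset.subset_univ A) le_rfl
      · simp only [hr']
        rw [Finset.union_sdiff_of_subset hSA]
        have h2 : ρ ≤ M.r A := by rw [hρ]; exact M.mono hSA
        omega
    · intro B hB
      rw [Finset.mem_filter, Finset.mem_powerset] at hB
      obtain ⟨hBsub, hrB⟩ := hB
      simp only [hr'] at hrB
      rw [hF, Finset.filter_filter, Finset.mem_filter, Finset.mem_powerset]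
      have := hρle B
      refine ⟨Finset.subset_univ _, by omega, Finset.subset_union_left⟩
    · intro A hA
      rw [hF, Finset.filter_filter, Finset.mem_filter, Finset.mem_powerset] at hA
      exact Finset.union_sdiff_of_subset hA.2.2
    · intro B hB
      rw [Finset.mem_filter, Finset.mem_powerset] at hB
      have hdisj : Disjoint S B :=
        Finset.disjoint_of_subset_right hB.1 Finset.disjoint_sdiff
      exact Finset.union_sdiff_cancel_left hdisj
    · intro A _
      rfl
  rw [hsum2]
  -- Step 4: sign bookkeeping and the core inequality
  have hsign : (-1 : ℝ) ^ (s + ρ) = (-1) ^ (s - ρ) := by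
    have h1 : s + ρ = (s - ρ) + 2 * ρ := by omega
    rw [h1, pow_add, pow_mul, neg_one_sq, one_pow, mul_one]
  rw [hsign]
  apply core_sign (Finset.univ \ S).card (Finset.univ \ S) le_rfl
  · intro A
    have h1 := hρle A
    have h2 : M.r (S ∪ A) ≤ M.r S + A.card :=
      r_union_le M.r_le_card M.submodular S A
    rw [hr']
    simp only
    omega
  · intro A B hAB
    have := M.mono (Finset.union_subset_union_right hAB (s := S))
    simp only [hr']
    omega
  · intro A B
    have h := M.submodular (S ∪ A) (S ∪ B)
    have hu : (S ∪ A) ∪ (S ∪ B) = S ∪ (A ∪ B) := by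
      ext x; simp only [Finset.mem_union]; tauto
    have hi : (S ∪ A) ∩ (S ∪ B) = S ∪ (A ∩ B) :=
      (Finset.union_inter_distrib_left S A B).symm
    rw [hu, hi] at h
    have h1 := hρle (A ∪ B)
    have h2 := hρle (A ∩ B)
    have h3 := hρle A
    have h4 := hρle B
    simp only [hr']
    omega
  · intro a ha h0
    have haS : a ∉ S := (Finset.mem_sdiff.mp ha).2
    have hins : S ∪ {a} = insert a S := by
      rw [Finset.union_comm, ← Finset.insert_eq]
    simp only [hr'] at h0
    rw [hins] at h0
    have h1 := hρle {a}
    rw [hins] at h1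
    exact hspanned a haS (by omega)
  · intro a ha h1
    have haS : a ∉ S := (Finset.mem_sdiff.mp ha).2
    have hins : S ∪ {a} = insert a S := by
      rw [Finset.union_comm, ← Finset.insert_eq]
    simp only [hr'] at h1
    rw [hins] at h1
    have h2 := hρle {a}
    rw [hins] at h2
    exact hnotspanned a haS (by omega)
end

section
/- Let G = (V,E) be a finite simple graph with c connected components, fix a real number q < 0, and let v : E → ℝ satisfy v_e ≥ −q for every bridge e of G and v_e ≥ −q/2 for every non-bridge edge e. Then (−1)^c Z_G(q,v) ≥ 0, with strict inequality if and only if every bridge e has v_e > −q. -/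
open Finset

/-- The multivariate Tutte polynomial `Z_G(q, v) = ∑_{A ⊆ E} q^{k(A)} ∏_{e ∈ A} v_e`. -/
noncomputable def tutteZ {V : Type*} [Fintype V] [DecidableEq V] (G : SimpleGraph V)
    [DecidableRel G.Adj] (q : ℝ) (v : Sym2 V → ℝ) : ℝ :=
  ∑ A ∈ G.edgeFinset.powerset, q ^ numCompOfEdges A * ∏ e ∈ A, v e

namespace DongAux

open SimpleGraph

variable {V : Type*} [Fintype V] [DecidableEq V]

/-- The spanning subgraph with edge set `A`. -/
abbrev gr (A : Finset (Sym2 V)) : SimpleGraph V :=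
  SimpleGraph.fromEdgeSet (A : Set (Sym2 V))

/-- Number of connected components of the spanning subgraph with edge set `A`. -/
noncomputable def kk (A : Finset (Sym2 V)) : ℕ := numCompOfEdges A

lemma kk_def (A : Finset (Sym2 V)) : kk A = Nat.card (gr A).ConnectedComponent := rfl

/-- `e` is a bridge of the edge set `E` (relative notion). -/
def Br (E : Finset (Sym2 V)) (e : Sym2 V) : Prop := kk (E.erase e) = kk E + 1

lemma gr_mono {A B : Finset (Sym2 V)} (h : A ⊆ B) : gr A ≤ gr B :=
  SimpleGraph.fromEdgeSet_mono (by exact_mod_cast h)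

/-- Walk decomposition lemma: reachability after adding a single edge `s(x,y)`. -/
lemma reach_insert_edge {A : Set (Sym2 V)} {x y u w : V}
    (h : (SimpleGraph.fromEdgeSet (insert s(x,y) A)).Reachable u w) :
    (SimpleGraph.fromEdgeSet A).Reachable u w ∨
      ((SimpleGraph.fromEdgeSet A).Reachable u x ∧ (SimpleGraph.fromEdgeSet A).Reachable y w) ∨
      ((SimpleGraph.fromEdgeSet A).Reachable u y ∧ (SimpleGraph.fromEdgeSet A).Reachable x w) := by
  obtain ⟨p⟩ := h
  induction p with
  | nil => exact Or.inl (Reachable.refl _)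
  | @cons a b c hadj tail ih =>
    rw [SimpleGraph.fromEdgeSet_adj] at hadj
    obtain ⟨hm, hne⟩ := hadj
    rcases Set.mem_insert_iff.mp hm with heq | hmem
    · -- s(a,b) = s(x,y)
      rw [Sym2.eq_iff] at heq
      rcases heq with ⟨rfl, rfl⟩ | ⟨rfl, rfl⟩
      · -- a = x, b = y
        rcases ih with h1 | ⟨h1, h2⟩ | ⟨h1, h2⟩
        · exact Or.inr (Or.inl ⟨Reachable.refl _, h1⟩)
        · exact Or.inr (Or.inl ⟨Reachable.refl _, h2⟩)
        · exact Or.inl h2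
      · -- a = y, b = x
        rcases ih with h1 | ⟨h1, h2⟩ | ⟨h1, h2⟩
        · exact Or.inr (Or.inr ⟨Reachable.refl _, h1⟩)
        · exact Or.inl h2
        · exact Or.inr (Or.inr ⟨Reachable.refl _, h2⟩)
    · have hab : (SimpleGraph.fromEdgeSet A).Reachable a b :=
        ((SimpleGraph.fromEdgeSet_adj _).mpr ⟨hmem, hne⟩).reachable
      rcases ih with h1 | ⟨h1, h2⟩ | ⟨h1, h2⟩
      · exact Or.inl (hab.trans h1)
      · exact Or.inr (Or.inl ⟨hab.trans h1, h2⟩)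
      · exact Or.inr (Or.inr ⟨hab.trans h1, h2⟩)

section counting

variable {A : Finset (Sym2 V)} {x y : V}

private lemma gr_insert (A : Finset (Sym2 V)) (e : Sym2 V) :
    gr (insert e A) = SimpleGraph.fromEdgeSet (insert e (A : Set (Sym2 V))) :=
  congrArg SimpleGraph.fromEdgeSet (Finset.coe_insert _ _)

/-- The canonical map on connected components induced by adding edges. -/
noncomputable def phi {A B : Finset (Sym2 V)} (h : A ⊆ B) :
    (gr A).ConnectedComponent → (gr B).ConnectedComponent :=
  Quot.map id (fun _ _ hr => hr.mono (gr_mono h))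

lemma phi_mk {A B : Finset (Sym2 V)} (h : A ⊆ B) (u : V) :
    phi h ((gr A).connectedComponentMk u) = (gr B).connectedComponentMk u := rfl

lemma phi_surjective {A B : Finset (Sym2 V)} (h : A ⊆ B) : Function.Surjective (phi h) := by
  intro c
  induction c using SimpleGraph.ConnectedComponent.ind with
  | _ v => exact ⟨(gr A).connectedComponentMk v, rfl⟩

lemma kk_insert_of_reachable (hxy : x ≠ y) (hr : (gr A).Reachable x y) :
    kk (insert s(x,y) A) = kk A := by
  have hsub : A ⊆ insert s(x,y) A := Finset.subset_insert _ _
  have hinj : Function.Injective (phi hsub) := by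
    intro c d
    induction c using SimpleGraph.ConnectedComponent.ind with
    | _ u =>
    induction d using SimpleGraph.ConnectedComponent.ind with
    | _ w =>
    intro hcd
    rw [phi_mk, phi_mk, SimpleGraph.ConnectedComponent.eq] at hcd
    rw [SimpleGraph.ConnectedComponent.eq]
    rw [gr_insert] at hcd
    rcases reach_insert_edge hcd with h1 | ⟨h1, h2⟩ | ⟨h1, h2⟩
    · exact h1
    · exact (h1.trans hr).trans h2
    · exact (h1.trans hr.symm).trans h2
  exact ((Nat.card_eq_of_bijective _ ⟨hinj, phi_surjective hsub⟩)).symm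

lemma kk_insert_of_not_reachable (hxy : x ≠ y) (hr : ¬ (gr A).Reachable x y) :
    kk A = kk (insert s(x,y) A) + 1 := by
  classical
  have hsub : A ⊆ insert s(x,y) A := Finset.subset_insert _ _
  have hfin1 : Finite (gr A).ConnectedComponent := Quot.finite _
  have hfin2 : Finite (gr (insert s(x,y) A)).ConnectedComponent := Quot.finite _
  have hFs : Fintype (gr A).ConnectedComponent := Fintype.ofFinite _
  have hFt : Fintype (gr (insert s(x,y) A)).ConnectedComponent := Fintype.ofFinite _
  set f := phi hsub with hf
  have hedge : (gr (insert s(x,y) A)).Reachable x y := by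
    refine SimpleGraph.Adj.reachable ?_
    rw [gr_insert, SimpleGraph.fromEdgeSet_adj]
    exact ⟨Set.mem_insert _ _, hxy⟩
  have key : ∀ u : V, f ((gr A).connectedComponentMk u) =
      (gr (insert s(x,y) A)).connectedComponentMk x ↔
      ((gr A).connectedComponentMk u = (gr A).connectedComponentMk x ∨
       (gr A).connectedComponentMk u = (gr A).connectedComponentMk y) := by
    intro u
    rw [hf, phi_mk, SimpleGraph.ConnectedComponent.eq,
      SimpleGraph.ConnectedComponent.eq, SimpleGraph.ConnectedComponent.eq]
    constructor
    · intro h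
      rw [gr_insert] at h
      rcases reach_insert_edge h with h1 | ⟨h1, h2⟩ | ⟨h1, h2⟩
      · exact Or.inl h1
      · exact Or.inl h1
      · exact Or.inr h1
    · rintro (h | h)
      · exact h.mono (gr_mono hsub)
      · exact (h.mono (gr_mono hsub)).trans hedge.symm
  have hfib : ∀ c : (gr (insert s(x,y) A)).ConnectedComponent,
      (Finset.univ.filter (fun d => f d = c)).card =
        if c = (gr (insert s(x,y) A)).connectedComponentMk x then 2 else 1 := by
    intro c
    by_cases hcc : c = (gr (insert s(x,y) A)).connectedComponentMk x
    · subst hcc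
      rw [if_pos rfl]
      have heq : Finset.univ.filter
          (fun d => f d = (gr (insert s(x,y) A)).connectedComponentMk x) =
          {(gr A).connectedComponentMk x, (gr A).connectedComponentMk y} := by
        ext d
        induction d using SimpleGraph.ConnectedComponent.ind with
        | _ u =>
        simp only [Finset.mem_filter, Finset.mem_univ, true_and, Finset.mem_insert,
          Finset.mem_singleton]
        exact key u
      rw [heq]
      rw [Finset.card_insert_of_notMem, Finset.card_singleton]
      simp only [Finset.mem_singleton, SimpleGraph.ConnectedComponent.eq]
      exact hr
    · rw [if_neg hcc]
      obtain ⟨w, rfl⟩ : ∃ w, (gr (insert s(x,y) A)).connectedComponentMk w = c := by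
        induction c using SimpleGraph.ConnectedComponent.ind with
        | _ w => exact ⟨w, rfl⟩
      rw [Finset.card_eq_one]
      refine ⟨(gr A).connectedComponentMk w, ?_⟩
      ext d
      induction d using SimpleGraph.ConnectedComponent.ind with
      | _ u =>
      simp only [Finset.mem_filter, Finset.mem_univ, true_and, Finset.mem_singleton]
      rw [hf, phi_mk, SimpleGraph.ConnectedComponent.eq, SimpleGraph.ConnectedComponent.eq]
      constructor
      · intro h
        rw [gr_insert] at h
        rcases reach_insert_edge h with h1 | ⟨h1, h2⟩ | ⟨h1, h2⟩
        · exact h1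
        · exfalso
          apply hcc
          rw [SimpleGraph.ConnectedComponent.eq]
          exact (h2.mono (gr_mono hsub)).symm.trans hedge.symm
        · exfalso
          apply hcc
          rw [SimpleGraph.ConnectedComponent.eq]
          exact (h2.mono (gr_mono hsub)).symm
      · intro h
        exact h.mono (gr_mono hsub)
  have hcount : Fintype.card (gr A).ConnectedComponent =
      Fintype.card (gr (insert s(x,y) A)).ConnectedComponent + 1 := by
    rw [← Finset.card_univ]
    rw [Finset.card_eq_sum_card_fiberwise (f := f) (t := Finset.univ)
      (fun x _ => Finset.mem_univ _)]
    have hterm : ∀ c ∈ (Finset.univ : Finset (gr (insert s(x,y) A)).ConnectedComponent),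
        (Finset.univ.filter (fun d => f d = c)).card =
          1 + if c = (gr (insert s(x,y) A)).connectedComponentMk x then 1 else 0 := by
      intro c _
      rw [hfib c]
      by_cases h : c = (gr (insert s(x,y) A)).connectedComponentMk x <;> simp [h]
    rw [Finset.sum_congr rfl hterm, Finset.sum_add_distrib, Finset.sum_ite_eq'
      Finset.univ ((gr (insert s(x,y) A)).connectedComponentMk x) (fun _ => 1)]
    simp [Finset.card_univ]
  rw [kk_def, kk_def, Nat.card_eq_fintype_card, Nat.card_eq_fintype_card]
  exact hcount

end counting

lemma sym2_ne_of_not_isDiag {x y : V} (h : ¬ (s(x,y) : Sym2 V).IsDiag) : x ≠ y := by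
  simpa [Sym2.mk_isDiag_iff] using h

lemma kk_erase_cases {E : Finset (Sym2 V)} {e : Sym2 V} (he : e ∈ E) (hnd : ¬ e.IsDiag) :
    kk (E.erase e) = kk E ∨ kk (E.erase e) = kk E + 1 := by
  induction e using Sym2.inductionOn with
  | _ x y =>
  have hne : x ≠ y := sym2_ne_of_not_isDiag hnd
  by_cases hr : (gr (E.erase s(x,y))).Reachable x y
  · left
    have h2 := kk_insert_of_reachable hne hr
    rw [Finset.insert_erase he] at h2
    exact h2.symm
  · right
    have := kk_insert_of_not_reachable hne hr
    rwa [Finset.insert_erase he] at this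

lemma notBr_kk {E : Finset (Sym2 V)} {e : Sym2 V} (he : e ∈ E) (hnd : ¬ e.IsDiag)
    (h : ¬ Br E e) : kk (E.erase e) = kk E := by
  rcases kk_erase_cases he hnd with h1 | h1
  · exact h1
  · exact absurd h1 h

lemma br_iff_not_reach {E : Finset (Sym2 V)} {x y : V} (hne : x ≠ y) (he : s(x,y) ∈ E) :
    Br E s(x,y) ↔ ¬ (gr (E.erase s(x,y))).Reachable x y := by
  constructor
  · intro hbr hr
    have := kk_insert_of_reachable hne hr
    rw [Finset.insert_erase he] at this
    rw [Br] at hbr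
    omega
  · intro hnr
    have := kk_insert_of_not_reachable hne hnr
    rw [Finset.insert_erase he] at this
    rw [Br]
    omega

/-- A bridge stays a bridge after deleting another edge. -/
lemma br_of_br_of_mem {E : Finset (Sym2 V)} {e b : Sym2 V} (hnd : ¬ e.IsDiag)
    (hbr : Br E e) (heE : e ∈ E) (heb : e ≠ b) : Br (E.erase b) e := by
  induction e using Sym2.inductionOn with
  | _ x y =>
  have hne : x ≠ y := sym2_ne_of_not_isDiag hnd
  rw [br_iff_not_reach hne (Finset.mem_erase_of_ne_of_mem heb heE)]
  rw [br_iff_not_reach hne heE] at hbr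
  intro hr
  exact hbr (hr.mono (gr_mono (by
    intro a ha
    simp only [Finset.mem_erase] at ha ⊢
    exact ⟨ha.1, ha.2.2⟩)))

/-! ### The partition function with forced edges -/

noncomputable def Zf (q : ℝ) (v : Sym2 V → ℝ) (E F : Finset (Sym2 V)) : ℝ :=
  ∑ A ∈ E.powerset.filter (fun A => F ⊆ A), q ^ kk A * ∏ e ∈ A \ F, v e

/-- Deletion–contraction for `Zf`. -/
lemma Zf_rec (q : ℝ) (v : Sym2 V → ℝ) {E F : Finset (Sym2 V)} {e : Sym2 V}
    (he : e ∈ E) (heF : e ∉ F) :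
    Zf q v E F = Zf q v (E.erase e) F + v e * Zf q v E (insert e F) := by
  classical
  rw [Zf, ← Finset.sum_filter_add_sum_filter_not (E.powerset.filter fun A => F ⊆ A)
    (fun A => e ∈ A)]
  have h1 : (E.powerset.filter fun A => F ⊆ A).filter (fun A => ¬ e ∈ A) =
      (E.erase e).powerset.filter (fun A => F ⊆ A) := by
    ext A
    simp only [Finset.mem_filter, Finset.mem_powerset, Finset.subset_erase]
    tauto
  have h2 : (E.powerset.filter fun A => F ⊆ A).filter (fun A => e ∈ A) =
      E.powerset.filter (fun A => insert e F ⊆ A) := by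
    ext A
    simp only [Finset.mem_filter, Finset.mem_powerset, Finset.insert_subset_iff]
    tauto
  rw [h1, h2]
  have h3 : ∀ A ∈ E.powerset.filter (fun A => insert e F ⊆ A),
      q ^ kk A * ∏ f ∈ A \ F, v f = v e * (q ^ kk A * ∏ f ∈ A \ insert e F, v f) := by
    intro A hA
    simp only [Finset.mem_filter, Finset.mem_powerset, Finset.insert_subset_iff] at hA
    obtain ⟨hAE, heA, hFA⟩ := hA
    have hsd : A \ F = insert e (A \ insert e F) := by
      ext a
      simp only [Finset.mem_sdiff, Finset.mem_insert, not_or]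
      constructor
      · rintro ⟨haA, haF⟩
        by_cases hae : a = e
        · exact Or.inl hae
        · exact Or.inr ⟨haA, hae, haF⟩
      · rintro (rfl | ⟨haA, _, haF⟩)
        · exact ⟨heA, heF⟩
        · exact ⟨haA, haF⟩
    rw [hsd, Finset.prod_insert (by simp)]
    ring
  rw [Finset.sum_congr rfl h3, ← Finset.mul_sum]
  unfold Zf
  ring

/-- Contraction identity across a bridge. -/
lemma Zf_bridge (q : ℝ) (v : Sym2 V → ℝ) {E F : Finset (Sym2 V)} {x y : V}
    (hxy : x ≠ y) (he : s(x,y) ∈ E) (hF : F ⊆ E.erase s(x,y))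
    (hnr : ¬ (gr (E.erase s(x,y))).Reachable x y) :
    Zf q v (E.erase s(x,y)) F = q * Zf q v E (insert s(x,y) F) := by
  classical
  have heF : s(x,y) ∉ F := fun h => (Finset.notMem_erase _ _) (hF h)
  rw [Zf, Zf, Finset.mul_sum]
  refine Finset.sum_nbij' (i := fun A => insert s(x,y) A) (j := fun A => A.erase s(x,y))
    ?_ ?_ ?_ ?_ ?_
  · intro A hA
    simp only [Finset.mem_filter, Finset.mem_powerset] at hA ⊢
    refine ⟨Finset.insert_subset he (hA.1.trans (Finset.erase_subset _ _)), ?_⟩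
    exact (Finset.insert_subset_insert _ hA.2)
  · intro A hA
    simp only [Finset.mem_filter, Finset.mem_powerset] at hA ⊢
    constructor
    · exact Finset.erase_subset_erase _ hA.1
    · intro f hf
      refine Finset.mem_erase_of_ne_of_mem ?_ (hA.2 (Finset.mem_insert_of_mem hf))
      rintro rfl
      exact heF hf
  · intro A hA
    simp only [Finset.mem_filter, Finset.mem_powerset, Finset.subset_erase] at hA
    exact Finset.erase_insert hA.1.2
  · intro A hA
    simp only [Finset.mem_filter, Finset.mem_powerset, Finset.insert_subset_iff] at hA
    exact Finset.insert_erase hA.2.1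
  · intro A hA
    simp only [Finset.mem_filter, Finset.mem_powerset, Finset.subset_erase] at hA
    obtain ⟨⟨hAE, heA⟩, hFA⟩ := hA
    have hkk : kk A = kk (insert s(x,y) A) + 1 := by
      refine kk_insert_of_not_reachable hxy ?_
      intro hr
      exact hnr (hr.mono (gr_mono (Finset.subset_erase.mpr ⟨hAE, heA⟩)))
    have hsd : insert s(x,y) A \ insert s(x,y) F = A \ F := by
      ext a
      simp only [Finset.mem_sdiff, Finset.mem_insert, not_or]
      constructor
      · rintro ⟨(rfl | haA), hne, haF⟩
        · exact absurd rfl hne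
        · exact ⟨haA, haF⟩
      · rintro ⟨haA, haF⟩
        have : a ≠ s(x,y) := fun h => heA (h ▸ haA)
        exact ⟨Or.inr haA, this, haF⟩
    rw [hsd, hkk, pow_succ]
    ring

/-- Contracting a bridge with canonical weight `-q/2` halves `Zf` (up to `q/2`). -/
lemma Zf_bridge_half (q : ℝ) (v : Sym2 V → ℝ) {E F : Finset (Sym2 V)} {e : Sym2 V}
    (he : e ∈ E) (heF : e ∉ F) (hF : F ⊆ E) (hnd : ¬ e.IsDiag) (hbr : Br E e)
    (hv : v e = -q/2) :
    Zf q v E F = (q/2) * Zf q v E (insert e F) := by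
  induction e using Sym2.inductionOn with
  | _ x y =>
  have hne : x ≠ y := sym2_ne_of_not_isDiag hnd
  have hnr := (br_iff_not_reach hne he).mp hbr
  rw [Zf_rec q v he heF,
    Zf_bridge q v hne he (Finset.subset_erase.mpr ⟨hF, heF⟩) hnr, hv]
  ring

/-- Stripping a set of bridges, all with canonical weight. -/
lemma Zf_strip (q : ℝ) (v : Sym2 V → ℝ) {E : Finset (Sym2 V)} (S : Finset (Sym2 V))
    {F : Finset (Sym2 V)} (hS : S ⊆ E) (hF : F ⊆ E) (hSF : ∀ f ∈ S, f ∉ F)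
    (hnd : ∀ f ∈ S, ¬ f.IsDiag) (hbr : ∀ f ∈ S, Br E f) (hv : ∀ f ∈ S, v f = -q/2) :
    Zf q v E F = (q/2) ^ S.card * Zf q v E (F ∪ S) := by
  classical
  induction S using Finset.induction_on generalizing F with
  | empty => simp
  | @insert a S ha ih =>
    have haE : a ∈ E := hS (Finset.mem_insert_self _ _)
    have haF : a ∉ F := hSF a (Finset.mem_insert_self _ _)
    rw [Zf_bridge_half q v haE haF hF (hnd a (Finset.mem_insert_self _ _))
      (hbr a (Finset.mem_insert_self _ _)) (hv a (Finset.mem_insert_self _ _))]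
    rw [ih (fun f hf => hS (Finset.mem_insert_of_mem hf))
      (Finset.insert_subset haE hF)
      (fun f hf => by
        simp only [Finset.mem_insert, not_or]
        exact ⟨fun h => ha (h ▸ hf), hSF f (Finset.mem_insert_of_mem hf)⟩)
      (fun f hf => hnd f (Finset.mem_insert_of_mem hf))
      (fun f hf => hbr f (Finset.mem_insert_of_mem hf))
      (fun f hf => hv f (Finset.mem_insert_of_mem hf))]
    rw [Finset.card_insert_of_notMem ha, Finset.insert_union, Finset.union_insert]
    rw [pow_succ]
    ring


lemma erase_comm' (s : Finset (Sym2 V)) (a b : Sym2 V) :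
    (s.erase a).erase b = (s.erase b).erase a := by
  ext x
  simp only [Finset.mem_erase]
  tauto

/-- Endpoint-free version of the bridge contraction identity. -/
lemma Zf_bridge' (q : ℝ) (v : Sym2 V → ℝ) {E F : Finset (Sym2 V)} {e : Sym2 V}
    (he : e ∈ E) (hnd : ¬ e.IsDiag) (hF : F ⊆ E.erase e) (hbr : Br E e) :
    Zf q v (E.erase e) F = q * Zf q v E (insert e F) := by
  induction e using Sym2.inductionOn with
  | _ x y =>
  have hne : x ≠ y := sym2_ne_of_not_isDiag hnd
  exact Zf_bridge q v hne he hF ((br_iff_not_reach hne he).mp hbr)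

open Classical in
noncomputable def BB (E F : Finset (Sym2 V)) (e : Sym2 V) : Finset (Sym2 V) :=
  (E.erase e).filter (fun f => Br (E.erase e) f ∧ f ∉ F)

lemma mem_BB {E F : Finset (Sym2 V)} {e f : Sym2 V} :
    f ∈ BB E F e ↔ f ∈ E.erase e ∧ Br (E.erase e) f ∧ f ∉ F := by
  classical
  simp [BB]

lemma BB_insert {E F : Finset (Sym2 V)} {e b : Sym2 V} (hb : b ∈ BB E F e) :
    BB E (insert b F) e = (BB E F e).erase b := by
  ext f
  simp only [mem_BB, Finset.mem_erase, Finset.mem_insert, not_or]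
  tauto

/-- Key graph-theoretic fact: if `e` is not a bridge of `E`, and `b, f` are (new) bridges
of `E \ e`, with `b` not a bridge of `E`, then `f` is still a bridge of `E \ b`. -/
lemma br_erase_other {E : Finset (Sym2 V)} {e b f : Sym2 V}
    (hnd : ∀ g ∈ E, ¬ g.IsDiag) (heE : e ∈ E)
    (hbE : b ∈ E.erase e) (hbrEb_e : Br (E.erase b) e)
    (hfE : f ∈ E.erase e) (hbrf : Br (E.erase e) f) (hfb : f ≠ b) :
    Br (E.erase b) f := by
  have hbe : b ≠ e := Finset.ne_of_mem_erase hbE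
  have hfe : f ≠ e := Finset.ne_of_mem_erase hfE
  have hfEE : f ∈ E := Finset.mem_of_mem_erase hfE
  have heEb : e ∈ E.erase b := Finset.mem_erase_of_ne_of_mem (Ne.symm hbe) heE
  induction e using Sym2.inductionOn with
  | _ x y =>
  induction f using Sym2.inductionOn with
  | _ a c =>
  have hxy : x ≠ y := sym2_ne_of_not_isDiag (hnd _ heE)
  have hac : a ≠ c := sym2_ne_of_not_isDiag (hnd _ hfEE)
  rw [br_iff_not_reach hac (Finset.mem_erase_of_ne_of_mem hfb hfEE)]
  intro hreach
  -- the diamond fact: x and y are disconnected in (E \ b) \ e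
  have hdia : ¬ (gr ((E.erase b).erase s(x,y))).Reachable x y :=
    (br_iff_not_reach hxy heEb).mp hbrEb_e
  -- rewrite the graph as an insertion of the edge e
  have hein : s(x,y) ∈ (E.erase b).erase s(a,c) :=
    Finset.mem_erase_of_ne_of_mem (Ne.symm hfe) heEb
  have hins : (E.erase b).erase s(a,c) =
      insert s(x,y) (((E.erase b).erase s(a,c)).erase s(x,y)) :=
    (Finset.insert_erase hein).symm
  rw [hins, gr_insert] at hreach
  have hsub0 : ((E.erase b).erase s(a,c)).erase s(x,y) ⊆
      (E.erase s(x,y)).erase s(a,c) := by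
    intro g hg
    simp only [Finset.mem_erase] at hg ⊢
    tauto
  have hsub1 : ((E.erase b).erase s(a,c)).erase s(x,y) ⊆
      (E.erase s(x,y)).erase b := by
    intro g hg
    simp only [Finset.mem_erase] at hg ⊢
    tauto
  have hfnr : ¬ (gr ((E.erase s(x,y)).erase s(a,c))).Reachable a c :=
    (br_iff_not_reach hac hfE).mp hbrf
  have hadj : (gr ((E.erase s(x,y)).erase b)).Adj a c := by
    rw [SimpleGraph.fromEdgeSet_adj]
    refine ⟨?_, hac⟩
    exact_mod_cast Finset.mem_erase_of_ne_of_mem hfb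
      (Finset.mem_erase_of_ne_of_mem hfe hfEE)
  have hdia' : ¬ (gr ((E.erase s(x,y)).erase b)).Reachable x y := by
    rw [erase_comm']
    exact hdia
  rcases reach_insert_edge hreach with h1 | ⟨h1, h2⟩ | ⟨h1, h2⟩
  · exact hfnr (h1.mono (gr_mono hsub0))
  · -- a ~ x and y ~ c in the base graph
    exact hdia' ((h1.mono (gr_mono hsub1)).symm.trans
      (hadj.reachable.trans (h2.mono (gr_mono hsub1)).symm))
  · -- a ~ y and x ~ c
    exact hdia' ((h2.mono (gr_mono hsub1)).trans
      (hadj.reachable.symm.trans (h1.mono (gr_mono hsub1))))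

/-- The telescoping identity. -/
lemma T_identity (q : ℝ) (hq : q ≠ 0) (v : Sym2 V → ℝ) :
    ∀ (n : ℕ) (E F : Finset (Sym2 V)) (e : Sym2 V),
      (BB E F e).card = n →
      F ⊆ E → e ∈ E → e ∉ F → (∀ f ∈ E, ¬ f.IsDiag) →
      ¬ Br E e → (∀ f ∈ BB E F e, ¬ Br E f) →
      v e = -q/2 → (∀ f ∈ BB E F e, v f = -q/2) →
      Zf q v E F = (-q/2) ^ n *
        ((-q/2) * Zf q v E (insert e (F ∪ BB E F e)) +
          (if Even n then 1 else 0) * Zf q v (E.erase e) (F ∪ BB E F e)) := by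
  intro n
  induction n with
  | zero =>
    intro E F e hcard hFE heE heF hnd hbre hbrB hve hvB
    rw [Finset.card_eq_zero] at hcard
    rw [hcard, Finset.union_empty]
    rw [Zf_rec q v heE heF, hve]
    simp only [Even.zero, if_pos, pow_zero]
    ring
  | succ m ih =>
    intro E F e hcard hFE heE heF hnd hbre hbrB hve hvB
    have hBne : (BB E F e).Nonempty := Finset.card_pos.mp (by omega)
    obtain ⟨b, hb⟩ := hBne
    obtain ⟨hbEe, hbrb, hbF⟩ := mem_BB.mp hb
    have hbE : b ∈ E := Finset.mem_of_mem_erase hbEe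
    have hbe : b ≠ e := Finset.ne_of_mem_erase hbEe
    have hbnd : ¬ b.IsDiag := hnd b hbE
    have hend : ¬ e.IsDiag := hnd e heE
    -- (a) e is a bridge of E \ b
    have hkEe : kk (E.erase e) = kk E := notBr_kk heE hend hbre
    have hkEb : kk (E.erase b) = kk E := notBr_kk hbE hbnd (hbrB b hb)
    have hbrEb_e : Br (E.erase b) e := by
      rw [Br, erase_comm', hkEb]
      rw [Br] at hbrb
      rw [hbrb, hkEe]
    -- (b) deletion-contraction at b
    have step1 : Zf q v E F = Zf q v (E.erase b) F + (-q/2) * Zf q v E (insert b F) := by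
      rw [Zf_rec q v hbE hbF, hvB b hb]
    -- (c) contract e in E \ b  (bridge with canonical weight)
    have heEb : e ∈ E.erase b := Finset.mem_erase_of_ne_of_mem (Ne.symm hbe) heE
    have step2 : Zf q v (E.erase b) F = (q/2) * Zf q v (E.erase b) (insert e F) :=
      Zf_bridge_half q v heEb heF
        (fun g hg => Finset.mem_erase_of_ne_of_mem (fun h => hbF (h ▸ hg)) (hFE hg))
        hend hbrEb_e hve
    -- (d) all remaining new bridges are bridges of E \ b
    have hd : ∀ f ∈ (BB E F e).erase b, Br (E.erase b) f := by
      intro f hf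
      obtain ⟨hfb, hfBB⟩ := Finset.mem_erase.mp hf
      obtain ⟨hfEe, hbrf, _⟩ := mem_BB.mp hfBB
      exact br_erase_other hnd heE hbEe hbrEb_e hfEe hbrf hfb
    -- (e) strip remaining bridges by contraction
    have step3 : Zf q v (E.erase b) (insert e F) =
        (q/2) ^ m * Zf q v (E.erase b) (insert e F ∪ (BB E F e).erase b) := by
      have hcard' : ((BB E F e).erase b).card = m := by
        rw [Finset.card_erase_of_mem hb, hcard]
        omega
      rw [← hcard']
      refine Zf_strip q v _ ?_ ?_ ?_ ?_ ?_ ?_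
      · intro f hf
        obtain ⟨hfb, hfBB⟩ := Finset.mem_erase.mp hf
        exact Finset.mem_erase_of_ne_of_mem hfb
          (Finset.mem_of_mem_erase (mem_BB.mp hfBB).1)
      · exact Finset.insert_subset heEb
          (fun g hg => Finset.mem_erase_of_ne_of_mem (fun h => hbF (h ▸ hg)) (hFE hg))
      · intro f hf
        obtain ⟨hfb, hfBB⟩ := Finset.mem_erase.mp hf
        obtain ⟨hfEe, _, hfF⟩ := mem_BB.mp hfBB
        simp only [Finset.mem_insert, not_or]
        exact ⟨Finset.ne_of_mem_erase hfEe, hfF⟩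
      · intro f hf
        exact hnd f (Finset.mem_of_mem_erase (mem_BB.mp (Finset.mem_of_mem_erase hf)).1)
      · exact hd
      · intro f hf
        exact hvB f (Finset.mem_of_mem_erase hf)
    -- (f) convert the doubly-contracted term
    have hins_union : insert e F ∪ (BB E F e).erase b =
        insert e (F ∪ (BB E F e).erase b) := Finset.insert_union _ _ _
    have hFB : insert b (F ∪ (BB E F e).erase b) = F ∪ BB E F e := by
      rw [Finset.union_comm F, Finset.union_comm F, ← Finset.insert_union,
        Finset.insert_erase hb]
    have step4 : Zf q v (E.erase b) (insert e (F ∪ (BB E F e).erase b)) =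
        Zf q v (E.erase e) (F ∪ BB E F e) := by
      have hsubF2b : F ∪ (BB E F e).erase b ⊆ (E.erase b).erase e := by
        intro g hg
        rcases Finset.mem_union.mp hg with hgF | hgB
        · refine Finset.mem_erase_of_ne_of_mem (fun h => heF (h ▸ hgF)) ?_
          exact Finset.mem_erase_of_ne_of_mem (fun h => hbF (h ▸ hgF)) (hFE hgF)
        · obtain ⟨hgb, hgBB⟩ := Finset.mem_erase.mp hgB
          obtain ⟨hgEe, _, _⟩ := mem_BB.mp hgBB
          rw [erase_comm']
          exact Finset.mem_erase_of_ne_of_mem hgb hgEe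
      have hsubF2e : F ∪ (BB E F e).erase b ⊆ (E.erase e).erase b := by
        rw [← erase_comm']
        exact hsubF2b
      have h41 : Zf q v ((E.erase b).erase e) (F ∪ (BB E F e).erase b) =
          q * Zf q v (E.erase b) (insert e (F ∪ (BB E F e).erase b)) :=
        Zf_bridge' q v heEb hend hsubF2b hbrEb_e
      have h42 : Zf q v ((E.erase e).erase b) (F ∪ (BB E F e).erase b) =
          q * Zf q v (E.erase e) (insert b (F ∪ (BB E F e).erase b)) :=
        Zf_bridge' q v hbEe hbnd hsubF2e hbrb
      rw [erase_comm'] at h41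
      rw [h41, hFB] at h42
      exact mul_left_cancel₀ hq h42
    -- (g) induction hypothesis at (E, insert b F)
    have hBB' : BB E (insert b F) e = (BB E F e).erase b := BB_insert hb
    have hIH : Zf q v E (insert b F) = (-q/2) ^ m *
        ((-q/2) * Zf q v E (insert e (F ∪ BB E F e)) +
          (if Even m then 1 else 0) * Zf q v (E.erase e) (F ∪ BB E F e)) := by
      have := ih E (insert b F) e
        (by rw [hBB', Finset.card_erase_of_mem hb, hcard]; omega)
        (Finset.insert_subset hbE hFE) heE
        (by simp only [Finset.mem_insert, not_or]
            exact ⟨Ne.symm hbe, heF⟩)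
        hnd hbre
        (by rw [hBB']; intro f hf; exact hbrB f (Finset.mem_of_mem_erase hf))
        hve
        (by rw [hBB']; intro f hf; exact hvB f (Finset.mem_of_mem_erase hf))
      rw [hBB'] at this
      have hun : insert b F ∪ (BB E F e).erase b = F ∪ BB E F e := by
        rw [Finset.insert_union, hFB]
      rw [hun] at this
      exact this
    -- assemble
    set X := Zf q v E (insert e (F ∪ BB E F e)) with hX
    set Y := Zf q v (E.erase e) (F ∪ BB E F e) with hY
    rw [step1, step2, step3, hins_union, step4, hIH]
    have hnq : (-q/2 : ℝ) = -(q/2) := by ring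
    rcases Nat.even_or_odd m with hm | hm
    · have hodd : Odd (m + 1) := Even.add_one hm
      have hp : ((-q/2 : ℝ)) ^ (m+1) = -((q/2) ^ (m+1)) := by
        rw [hnq]; exact Odd.neg_pow hodd _
      rw [if_pos hm, if_neg (Nat.not_even_iff_odd.mpr hodd)]
      have hp' : ((-q/2 : ℝ)) ^ m = (q/2) ^ m := by
        rw [hnq]; exact Even.neg_pow hm _
      rw [hp, hp']
      ring
    · have heven : Even (m + 1) := Odd.add_one hm
      have hp : ((-q/2 : ℝ)) ^ (m+1) = (q/2) ^ (m+1) := by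
        rw [hnq]; exact Even.neg_pow heven _
      have hp' : ((-q/2 : ℝ)) ^ m = -((q/2) ^ m) := by
        rw [hnq]; exact Odd.neg_pow hm _
      rw [if_neg (Nat.not_even_iff_odd.mpr hm), if_pos heven]
      rw [hp, hp']
      ring


lemma zf_self (q : ℝ) (v : Sym2 V → ℝ) (E : Finset (Sym2 V)) :
    Zf q v E E = q ^ kk E := by
  have hset : E.powerset.filter (fun A => E ⊆ A) = {E} := by
    ext A
    simp only [Finset.mem_filter, Finset.mem_powerset, Finset.mem_singleton]
    constructor
    · rintro ⟨h1, h2⟩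
      exact Finset.Subset.antisymm h1 h2
    · rintro rfl
      exact ⟨Finset.Subset.refl _, Finset.Subset.refl _⟩
  rw [Zf, hset, Finset.sum_singleton, Finset.sdiff_self, Finset.prod_empty, mul_one]

/-- Core positivity: canonical weights, no free bridges. -/
lemma core (q : ℝ) (hq : q < 0) (v : Sym2 V → ℝ) :
    ∀ (n : ℕ) (E F : Finset (Sym2 V)), (E \ F).card = n →
      F ⊆ E → (∀ f ∈ E, ¬ f.IsDiag) →
      (∀ f ∈ E, f ∉ F → ¬ Br E f ∧ v f = -q/2) →
      0 < (-1 : ℝ) ^ kk E * Zf q v E F := by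
  have hq' : q ≠ 0 := ne_of_lt hq
  have hq2 : (0 : ℝ) < -q/2 := by linarith
  intro n
  induction n using Nat.strong_induction_on with
  | _ n ih =>
  intro E F hcard hFE hnd hfree
  by_cases hEF : E \ F = ∅
  · -- base case : F = E
    have hFeq : F = E := Finset.Subset.antisymm hFE
      (by rwa [← Finset.sdiff_eq_empty_iff_subset])
    subst hFeq
    rw [zf_self]
    have : ((-1 : ℝ)) ^ kk F * q ^ kk F = (-q) ^ kk F := by
      rw [neg_pow]
      ring
    rw [this]
    exact pow_pos (by linarith) _
  · obtain ⟨e, he⟩ := Finset.nonempty_iff_ne_empty.mpr hEF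
    obtain ⟨heE, heF⟩ := Finset.mem_sdiff.mp he
    have hbre : ¬ Br E e := (hfree e heE heF).1
    have hve : v e = -q/2 := (hfree e heE heF).2
    have hBsub : ∀ f ∈ BB E F e, f ∈ E ∧ f ∉ F ∧ f ∈ E.erase e := by
      intro f hf
      obtain ⟨h1, _, h3⟩ := mem_BB.mp hf
      exact ⟨Finset.mem_of_mem_erase h1, h3, h1⟩
    have hT := T_identity q hq' v (BB E F e).card E F e rfl hFE heE heF hnd hbre
      (fun f hf => (hfree f (hBsub f hf).1 (hBsub f hf).2.1).1)
      hve (fun f hf => (hfree f (hBsub f hf).1 (hBsub f hf).2.1).2)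
    -- the contraction term
    have hFBsub : insert e (F ∪ BB E F e) ⊆ E := by
      refine Finset.insert_subset heE (Finset.union_subset hFE ?_)
      intro f hf
      exact (hBsub f hf).1
    have hX : 0 < (-1 : ℝ) ^ kk E * Zf q v E (insert e (F ∪ BB E F e)) := by
      have hsub : E \ insert e (F ∪ BB E F e) ⊆ E \ F :=
        Finset.sdiff_subset_sdiff (Finset.Subset.refl _)
          ((Finset.subset_union_left).trans (Finset.subset_insert _ _))
      have hlt : (E \ insert e (F ∪ BB E F e)).card < n := by
        rw [← hcard]
        refine Finset.card_lt_card ((Finset.ssubset_iff_of_subset hsub).mpr ⟨e, he, ?_⟩)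
        simp
      refine ih _ hlt E _ rfl hFBsub hnd ?_
      intro f hfE hfF
      exact hfree f hfE (fun h => hfF (Finset.mem_insert_of_mem (Finset.mem_union_left _ h)))
    -- the deleted term
    have hFBe : F ∪ BB E F e ⊆ E.erase e := by
      refine Finset.union_subset ?_ ?_
      · intro g hg
        exact Finset.mem_erase_of_ne_of_mem (fun h => heF (h ▸ hg)) (hFE hg)
      · intro f hf
        exact (hBsub f hf).2.2
    have hY : 0 < (-1 : ℝ) ^ kk E * Zf q v (E.erase e) (F ∪ BB E F e) := by
      have hkk : kk (E.erase e) = kk E := notBr_kk heE (hnd e heE) hbre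
      have hsub : (E.erase e) \ (F ∪ BB E F e) ⊆ E \ F := by
        intro g hg
        obtain ⟨hg1, hg2⟩ := Finset.mem_sdiff.mp hg
        rw [Finset.mem_sdiff]
        exact ⟨Finset.mem_of_mem_erase hg1,
          fun h => hg2 (Finset.mem_union_left _ h)⟩
      have hlt : ((E.erase e) \ (F ∪ BB E F e)).card < n := by
        rw [← hcard]
        refine Finset.card_lt_card ((Finset.ssubset_iff_of_subset hsub).mpr ⟨e, he, ?_⟩)
        simp
      have := ih _ hlt (E.erase e) (F ∪ BB E F e) rfl hFBe
        (fun f hf => hnd f (Finset.mem_of_mem_erase hf))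
        ?_
      · rwa [hkk] at this
      · intro f hfE hfF
        constructor
        · intro hbr
          refine hfF (Finset.mem_union_right _ (mem_BB.mpr ⟨hfE, hbr, ?_⟩))
          exact fun h => hfF (Finset.mem_union_left _ h)
        · exact (hfree f (Finset.mem_of_mem_erase hfE)
            (fun h => hfF (Finset.mem_union_left _ h))).2
    -- assemble
    rw [hT]
    have hre : (-1 : ℝ) ^ kk E * ((-q/2) ^ (BB E F e).card *
        ((-q/2) * Zf q v E (insert e (F ∪ BB E F e)) +
          (if Even (BB E F e).card then 1 else 0) *
            Zf q v (E.erase e) (F ∪ BB E F e))) =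
        (-q/2) ^ (BB E F e).card *
        ((-q/2) * ((-1 : ℝ) ^ kk E * Zf q v E (insert e (F ∪ BB E F e))) +
          (if Even (BB E F e).card then 1 else 0) *
            ((-1 : ℝ) ^ kk E * Zf q v (E.erase e) (F ∪ BB E F e))) := by
      ring
    rw [hre]
    refine mul_pos (pow_pos hq2 _) ?_
    refine add_pos_of_pos_of_nonneg (mul_pos hq2 hX) ?_
    by_cases hev : Even (BB E F e).card
    · rw [if_pos hev, one_mul]
      exact le_of_lt hY
    · rw [if_neg hev, zero_mul]


lemma Zf_congr (q : ℝ) {v w : Sym2 V → ℝ} {E F : Finset (Sym2 V)}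
    (h : ∀ f ∈ E, f ∉ F → v f = w f) : Zf q v E F = Zf q w E F := by
  rw [Zf, Zf]
  refine Finset.sum_congr rfl ?_
  intro A hA
  obtain ⟨hAE, hFA⟩ : A ⊆ E ∧ F ⊆ A := by
    simpa [Finset.mem_powerset] using Finset.mem_filter.mp hA
  congr 1
  refine Finset.prod_congr rfl ?_
  intro f hf
  obtain ⟨hfA, hfF⟩ := Finset.mem_sdiff.mp hf
  exact h f (hAE hfA) hfF

/-- The main inductive statement: sign and strictness of `Zf`. -/
lemma main_lemma (q : ℝ) (hq : q < 0) :
    ∀ (n : ℕ) (E F : Finset (Sym2 V)) (v : Sym2 V → ℝ), (E \ F).card = n →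
      F ⊆ E → (∀ f ∈ E, ¬ f.IsDiag) →
      (∀ f ∈ E, f ∉ F → (-q/2 ≤ v f ∧ (Br E f → -q ≤ v f))) →
      0 ≤ (-1 : ℝ) ^ kk E * Zf q v E F ∧
        (0 < (-1 : ℝ) ^ kk E * Zf q v E F ↔
          ∀ f ∈ E, f ∉ F → Br E f → -q < v f) := by
  have hq' : q ≠ 0 := ne_of_lt hq
  intro n
  induction n using Nat.strong_induction_on with
  | _ n ih =>
  intro E F v hcard hFE hnd hyp
  by_cases hbr : ∃ f ∈ E, f ∉ F ∧ Br E f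
  · -- Case A : there is a free bridge f
    obtain ⟨f, hfE, hfF, hbrf⟩ := hbr
    have hFEf : F ⊆ E.erase f := fun g hg =>
      Finset.mem_erase_of_ne_of_mem (fun h => hfF (h ▸ hg)) (hFE hg)
    have hfac : Zf q v E F = (q + v f) * Zf q v E (insert f F) := by
      rw [Zf_rec q v hfE hfF, Zf_bridge' q v hfE (hnd f hfE) hFEf hbrf]
      ring
    have hflt : (E \ insert f F).card < n := by
      rw [← hcard]
      refine Finset.card_lt_card ((Finset.ssubset_iff_of_subset
        (Finset.sdiff_subset_sdiff (Finset.Subset.refl _) (Finset.subset_insert _ _))).mpr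
        ⟨f, Finset.mem_sdiff.mpr ⟨hfE, hfF⟩, by simp⟩)
    obtain ⟨IH1, IH2⟩ := ih _ hflt E (insert f F) v rfl
      (Finset.insert_subset hfE hFE) hnd
      (fun g hgE hgF => hyp g hgE (fun h => hgF (Finset.mem_insert_of_mem h)))
    have hc : 0 ≤ q + v f := by
      have := (hyp f hfE hfF).2 hbrf
      linarith
    have hmain : (-1 : ℝ) ^ kk E * Zf q v E F =
        (q + v f) * ((-1 : ℝ) ^ kk E * Zf q v E (insert f F)) := by
      rw [hfac]; ring
    constructor
    · rw [hmain]
      exact mul_nonneg hc IH1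
    · rw [hmain]
      constructor
      · intro h
        have hpos : 0 < q + v f ∧ 0 < (-1 : ℝ) ^ kk E * Zf q v E (insert f F) := by
          rcases mul_pos_iff.mp h with h1 | h1
          · exact h1
          · exfalso; linarith [h1.1]
        intro g hgE hgF hbrg
        by_cases hgf : g = f
        · subst hgf; linarith [hpos.1]
        · exact (IH2.mp hpos.2) g hgE
            (by simp only [Finset.mem_insert, not_or]; exact ⟨hgf, hgF⟩) hbrg
      · intro hall
        refine mul_pos ?_ (IH2.mpr ?_)
        · have := hall f hfE hfF hbrf
          linarith
        · intro g hgE hgF hbrg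
          exact hall g hgE (fun h => hgF (Finset.mem_insert_of_mem h)) hbrg
  · -- Case B : no free bridges
    push_neg at hbr
    have hnob : ∀ f ∈ E, f ∉ F → ¬ Br E f := fun f hf hff => (hbr f hf hff)
    classical
    set vc : Sym2 V → ℝ := fun g => if g ∈ E ∧ g ∉ F then -q/2 else v g with hvc
    have hcore : 0 < (-1 : ℝ) ^ kk E * Zf q vc E F := by
      refine core q hq vc n E F hcard hFE hnd ?_
      intro g hgE hgF
      exact ⟨hnob g hgE hgF, by rw [hvc]; simp [hgE, hgF]⟩
    have key : ∀ (S : Finset (Sym2 V)), S ⊆ E \ F →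
        (-1 : ℝ) ^ kk E * Zf q vc E F ≤
          (-1 : ℝ) ^ kk E * Zf q (fun g => if g ∈ S then v g else vc g) E F := by
      intro S
      induction S using Finset.induction_on with
      | empty =>
        intro _
        have heq : (fun g => if g ∈ (∅ : Finset (Sym2 V)) then v g else vc g) = vc := by
          funext g; simp
        rw [heq]
      | @insert a S ha ihS =>
        intro hsub
        have haEF : a ∈ E \ F := hsub (Finset.mem_insert_self _ _)
        obtain ⟨haE, haF⟩ := Finset.mem_sdiff.mp haEF
        have hsub' : S ⊆ E \ F := fun g hg => hsub (Finset.mem_insert_of_mem hg)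
        set w : Sym2 V → ℝ := fun g => if g ∈ S then v g else vc g with hw
        set w' : Sym2 V → ℝ := fun g => if g ∈ insert a S then v g else vc g with hw'
        have hcongr1 : Zf q w' (E.erase a) F = Zf q w (E.erase a) F := by
          refine Zf_congr q ?_
          intro g hgE _
          have hga : g ≠ a := Finset.ne_of_mem_erase hgE
          rw [hw, hw']
          simp [Finset.mem_insert, hga]
        have hcongr2 : Zf q w' E (insert a F) = Zf q w E (insert a F) := by
          refine Zf_congr q ?_
          intro g _ hgF
          have hga : g ≠ a := by
            intro h; exact hgF (h ▸ Finset.mem_insert_self _ _)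
          rw [hw, hw']
          simp [Finset.mem_insert, hga]
        have hwa : w' a = v a := by rw [hw']; simp
        have hwa' : w a = -q/2 := by
          rw [hw]
          simp only [ha, if_false, hvc]
          simp [haE, haF]
        have hrec' : Zf q w' E F = Zf q w' (E.erase a) F + v a * Zf q w' E (insert a F) := by
          rw [Zf_rec q w' haE haF, hwa]
        have hrec : Zf q w E F = Zf q w (E.erase a) F + (-q/2) * Zf q w E (insert a F) := by
          rw [Zf_rec q w haE haF, hwa']
        have hzlt : (E \ insert a F).card < n := by
          rw [← hcard]
          refine Finset.card_lt_card ((Finset.ssubset_iff_of_subset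
            (Finset.sdiff_subset_sdiff (Finset.Subset.refl _)
              (Finset.subset_insert _ _))).mpr ⟨a, haEF, by simp⟩)
        have hpos : 0 ≤ (-1 : ℝ) ^ kk E * Zf q w E (insert a F) := by
          refine (ih _ hzlt E (insert a F) w rfl
            (Finset.insert_subset haE hFE) hnd ?_).1
          intro g hgE hgF
          have hgF' : g ∉ F := fun h => hgF (Finset.mem_insert_of_mem h)
          constructor
          · simp only [hw]
            by_cases hgS : g ∈ S
            · rw [if_pos hgS]
              exact (hyp g hgE hgF').1
            · rw [if_neg hgS]
              simp only [hvc]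
              rw [if_pos ⟨hgE, hgF'⟩]
          · intro hbrg
            exact absurd hbrg (hnob g hgE hgF')
        have hva : -q/2 ≤ v a := (hyp a haE haF).1
        have hstep : (-1 : ℝ) ^ kk E * Zf q w E F ≤ (-1 : ℝ) ^ kk E * Zf q w' E F := by
          rw [hrec, hrec', hcongr1, hcongr2]
          have hdiff : (-1 : ℝ) ^ kk E * (Zf q w (E.erase a) F + v a * Zf q w E (insert a F))
              - (-1 : ℝ) ^ kk E * (Zf q w (E.erase a) F + (-q/2) * Zf q w E (insert a F))
              = (v a - (-q/2)) * ((-1 : ℝ) ^ kk E * Zf q w E (insert a F)) := by ring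
          nlinarith [mul_nonneg (by linarith : (0:ℝ) ≤ v a - (-q/2)) hpos]
        exact le_trans (ihS hsub') hstep
    have hfinal : 0 < (-1 : ℝ) ^ kk E * Zf q v E F := by
      have h1 := key (E \ F) (Finset.Subset.refl _)
      have heq : Zf q (fun g => if g ∈ E \ F then v g else vc g) E F = Zf q v E F := by
        refine Zf_congr q ?_
        intro g hgE hgF
        rw [if_pos (Finset.mem_sdiff.mpr ⟨hgE, hgF⟩)]
      rw [heq] at h1
      exact lt_of_lt_of_le hcore h1
    refine ⟨le_of_lt hfinal, iff_of_true hfinal ?_⟩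
    intro g hgE hgF hbrg
    exact absurd hbrg (hnob g hgE hgF)


lemma tutteZ_eq (G : SimpleGraph V) [DecidableRel G.Adj] (q : ℝ) (v : Sym2 V → ℝ) :
    tutteZ G q v = Zf q v G.edgeFinset ∅ := by
  rw [tutteZ, Zf]
  rw [Finset.filter_true_of_mem (fun A _ => Finset.empty_subset A)]
  refine Finset.sum_congr rfl ?_
  intro A _
  rw [Finset.sdiff_empty]
  rfl

lemma kk_edgeFinset (G : SimpleGraph V) [DecidableRel G.Adj] :
    kk G.edgeFinset = Nat.card G.ConnectedComponent := by
  have h : gr G.edgeFinset = G := by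
    rw [gr, SimpleGraph.coe_edgeFinset, SimpleGraph.fromEdgeSet_edgeSet]
  rw [kk_def, h]

lemma isBridge_iff_Br (G : SimpleGraph V) [DecidableRel G.Adj] {e : Sym2 V}
    (he : e ∈ G.edgeFinset) : G.IsBridge e ↔ Br G.edgeFinset e := by
  induction e using Sym2.inductionOn with
  | _ x y =>
  have hadj : G.Adj x y := by
    rw [SimpleGraph.mem_edgeFinset, SimpleGraph.mem_edgeSet] at he
    exact he
  have hne : x ≠ y := hadj.ne
  have hgraph : gr (G.edgeFinset.erase s(x,y)) = G \ SimpleGraph.fromEdgeSet {s(x,y)} := by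
    ext u w
    simp only [SimpleGraph.fromEdgeSet_adj, Finset.coe_erase, SimpleGraph.coe_edgeFinset,
      Set.mem_diff, Set.mem_singleton_iff, SimpleGraph.sdiff_adj, SimpleGraph.mem_edgeSet]
    constructor
    · rintro ⟨⟨hmem, hnee⟩, hnew⟩
      exact ⟨hmem, fun h => hnee h.1⟩
    · rintro ⟨hadj', hnadj⟩
      exact ⟨⟨hadj', fun h => hnadj ⟨h, hadj'.ne⟩⟩, hadj'.ne⟩
  rw [SimpleGraph.isBridge_iff, br_iff_not_reach hne he, hgraph]
  rfl

end DongAux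

/-- **(Dong)**  Let `G` be a finite simple graph with `c` components, fix `q < 0`, and
suppose `v_e ≥ -q` for every bridge `e` and `v_e ≥ -q/2` for every non-bridge edge.
Then `(-1)^c Z_G(q,v) ≥ 0`, with strict inequality if and only if every bridge `e`
has `v_e > -q`. -/
theorem tutteZ_sign_neg_q_dual {V : Type*} [Fintype V] [DecidableEq V]
    (G : SimpleGraph V) [DecidableRel G.Adj]
    (c : ℕ) (hc : c = Nat.card G.ConnectedComponent)
    (q : ℝ) (hq : q < 0) (v : Sym2 V → ℝ)
    (hbridge : ∀ e ∈ G.edgeFinset, G.IsBridge e → -q ≤ v e)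
    (hnonbridge : ∀ e ∈ G.edgeFinset, ¬G.IsBridge e → -q / 2 ≤ v e) :
    0 ≤ (-1 : ℝ) ^ c * tutteZ G q v ∧
    (0 < (-1 : ℝ) ^ c * tutteZ G q v ↔
      ∀ e ∈ G.edgeFinset, G.IsBridge e → -q < v e) := by
  have hnd : ∀ f ∈ G.edgeFinset, ¬ f.IsDiag := fun f hf =>
    G.not_isDiag_of_mem_edgeSet (SimpleGraph.mem_edgeFinset.mp hf)
  have hyp : ∀ f ∈ G.edgeFinset, f ∉ (∅ : Finset (Sym2 V)) →
      (-q/2 ≤ v f ∧ (DongAux.Br G.edgeFinset f → -q ≤ v f)) := by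
    intro f hf _
    by_cases hb : G.IsBridge f
    · have h1 := hbridge f hf hb
      exact ⟨by linarith, fun _ => h1⟩
    · have h1 := hnonbridge f hf hb
      refine ⟨by linarith, ?_⟩
      intro hbr
      exact absurd ((DongAux.isBridge_iff_Br G hf).mpr hbr) hb
  obtain ⟨h1, h2⟩ := DongAux.main_lemma q hq (G.edgeFinset \ ∅).card G.edgeFinset ∅ v rfl
    (Finset.empty_subset _) hnd hyp
  rw [DongAux.kk_edgeFinset] at h1 h2
  rw [← hc] at h1 h2
  rw [DongAux.tutteZ_eq G q v]
  constructor
  · exact h1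
  · rw [h2]
    constructor
    · intro hall e heE hbe
      exact hall e heE (Finset.notMem_empty e) ((DongAux.isBridge_iff_Br G heE).mp hbe)
    · intro hall f hfE _ hbrf
      exact hall f hfE ((DongAux.isBridge_iff_Br G hfE).mpr hbrf)
end

section
/- Let G = (V,E) be a finite simple graph with n vertices and c connected components, and let P_G(q) = ∑_{A ⊆ E} (−1)^{|A|} q^{k(A)} be its chromatic polynomial (Whitney's expansion). Then for every integer ℓ ≥ 0, the ℓ-th derivative of the function q ↦ P_G(q)/q^c evaluated at q = 1 satisfies (−1)^{n−c−ℓ} · (d^ℓ/dq^ℓ)(P_G(q)/q^c)|_{q=1} ≥ 0. -/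
open Finset

/-- The chromatic polynomial of a finite simple graph, via Whitney's expansion
`P_G(q) = ∑_{A ⊆ E} (-1)^{|A|} q^{k(A)}`, as a function of the real variable `q`. -/
noncomputable def chromPoly {V : Type*} [Fintype V] [DecidableEq V] (G : SimpleGraph V)
    [DecidableRel G.Adj] (q : ℝ) : ℝ :=
  ∑ A ∈ G.edgeFinset.powerset, (-1 : ℝ) ^ A.card * q ^ numCompOfEdges A

set_option linter.unusedSectionVars false

namespace ChromPolyAux

section Graph
open SimpleGraph

variable {V : Type*} [Fintype V]

noncomputable def kk (s : Set (Sym2 V)) : ℕ :=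
  Nat.card (SimpleGraph.fromEdgeSet s).ConnectedComponent

lemma mk_surj (G : SimpleGraph V) : Function.Surjective G.connectedComponentMk :=
  fun C => C.exists_rep

lemma kk_le_card (s : Set (Sym2 V)) : kk s ≤ Fintype.card V := by
  rw [kk, ← Nat.card_eq_fintype_card]
  exact Nat.card_le_card_of_surjective _ (mk_surj (fromEdgeSet s))

lemma kk_mono {s t : Set (Sym2 V)} (h : s ⊆ t) : kk t ≤ kk s := by
  apply Nat.card_le_card_of_surjective
    (ConnectedComponent.map (Hom.ofLE (fromEdgeSet_mono h)))
  intro C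
  refine C.ind fun v => ⟨(fromEdgeSet s).connectedComponentMk v, rfl⟩

lemma kk_empty : kk (∅ : Set (Sym2 V)) = Fintype.card V := by
  rw [kk, fromEdgeSet_empty, ← Nat.card_eq_fintype_card]
  symm
  apply Nat.card_eq_of_bijective (⊥ : SimpleGraph V).connectedComponentMk
  refine ⟨fun a b h => ?_, mk_surj _⟩
  exact reachable_bot.mp (ConnectedComponent.eq.mp h)

lemma kk_insert_diag (u : V) (s : Set (Sym2 V)) : kk (insert s(u,u) s) = kk s := by
  have : SimpleGraph.fromEdgeSet (insert s(u,u) s) = SimpleGraph.fromEdgeSet s := by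
    ext a b
    simp only [fromEdgeSet_adj, Set.mem_insert_iff]
    constructor
    · rintro ⟨h | h, hne⟩
      · rcases Sym2.eq_iff.mp h with ⟨rfl, rfl⟩ | ⟨rfl, rfl⟩ <;> exact absurd rfl hne
      · exact ⟨h, hne⟩
    · rintro ⟨h, hne⟩; exact ⟨Or.inr h, hne⟩
  rw [kk, this, kk]

/-- trichotomy for reachability after adding one edge -/
lemma reach_insert {s : Set (Sym2 V)} {u v x y : V}
    (h : (SimpleGraph.fromEdgeSet (insert s(u,v) s)).Reachable x y) :
    (SimpleGraph.fromEdgeSet s).Reachable x y ∨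
    ((SimpleGraph.fromEdgeSet s).Reachable x u ∧ (SimpleGraph.fromEdgeSet s).Reachable v y) ∨
    ((SimpleGraph.fromEdgeSet s).Reachable x v ∧ (SimpleGraph.fromEdgeSet s).Reachable u y) := by
  obtain ⟨w⟩ := h
  induction w with
  | nil => exact Or.inl (Reachable.refl _)
  | @cons a b y hadj p ih =>
    rw [fromEdgeSet_adj, Set.mem_insert_iff] at hadj
    obtain ⟨hm | hm, hne⟩ := hadj
    · rcases Sym2.eq_iff.mp hm with ⟨rfl, rfl⟩ | ⟨rfl, rfl⟩
      · -- a = u, b = v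
        rcases ih with h1 | ⟨h1, h2⟩ | ⟨h1, h2⟩
        · exact Or.inr (Or.inl ⟨Reachable.refl _, h1⟩)
        · exact Or.inr (Or.inl ⟨Reachable.refl _, h2⟩)
        · exact Or.inl h2
      · -- a = v, b = u
        rcases ih with h1 | ⟨h1, h2⟩ | ⟨h1, h2⟩
        · exact Or.inr (Or.inr ⟨Reachable.refl _, h1⟩)
        · exact Or.inl h2
        · exact Or.inr (Or.inr ⟨Reachable.refl _, h2⟩)
    · have hab : (SimpleGraph.fromEdgeSet s).Reachable a b :=
        (SimpleGraph.fromEdgeSet_adj s |>.mpr ⟨hm, hne⟩).reachable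
      rcases ih with h1 | ⟨h1, h2⟩ | ⟨h1, h2⟩
      · exact Or.inl (hab.trans h1)
      · exact Or.inr (Or.inl ⟨hab.trans h1, h2⟩)
      · exact Or.inr (Or.inr ⟨hab.trans h1, h2⟩)

section phi
variable (s : Set (Sym2 V)) (u v : V)

noncomputable abbrev Gsml := SimpleGraph.fromEdgeSet s
noncomputable abbrev Gbig := SimpleGraph.fromEdgeSet (insert s(u,v) s)

/-- the canonical map on components -/
noncomputable def phi : (Gsml s).ConnectedComponent → (Gbig s u v).ConnectedComponent :=
  SimpleGraph.ConnectedComponent.map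
    (SimpleGraph.Hom.ofLE (SimpleGraph.fromEdgeSet_mono (Set.subset_insert _ _)))

lemma phi_mk (x : V) :
    phi s u v ((Gsml s).connectedComponentMk x) = (Gbig s u v).connectedComponentMk x := rfl

lemma phi_surj : Function.Surjective (phi s u v) := by
  intro C; refine C.ind fun x => ⟨(Gsml s).connectedComponentMk x, rfl⟩

lemma kk_le_insert : kk s ≤ kk (insert s(u,v) s) + 1 := by
  classical
  have hinj : Function.Injective
      (fun C : (Gsml s).ConnectedComponent =>
        if C = (Gsml s).connectedComponentMk v then (Sum.inr () : (Gbig s u v).ConnectedComponent ⊕ Unit)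
        else Sum.inl (phi s u v C)) := by
    intro C D h
    simp only at h
    by_cases hC : C = (Gsml s).connectedComponentMk v <;>
      by_cases hD : D = (Gsml s).connectedComponentMk v
    · rw [hC, hD]
    · rw [if_pos hC, if_neg hD] at h; exact absurd h (by simp)
    · rw [if_neg hC, if_pos hD] at h; exact absurd h (by simp)
    · rw [if_neg hC, if_neg hD, Sum.inl.injEq] at h
      revert hC hD h
      refine C.ind fun x => D.ind fun y => fun hphi hx hy => ?_
      rw [phi_mk, phi_mk] at hphi
      have hr := SimpleGraph.ConnectedComponent.eq.mp hphi
      rcases reach_insert hr with h1 | ⟨h1, h2⟩ | ⟨h1, h2⟩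
      · exact SimpleGraph.ConnectedComponent.eq.mpr h1
      · exact absurd (SimpleGraph.ConnectedComponent.eq.mpr h2.symm) hy
      · exact absurd (SimpleGraph.ConnectedComponent.eq.mpr h1) hx
  have h2 := Nat.card_le_card_of_injective _ hinj
  rw [Nat.card_sum] at h2
  simpa [kk] using h2

lemma kk_insert_of_reach (h : (Gsml s).Reachable u v) : kk (insert s(u,v) s) = kk s := by
  symm
  apply Nat.card_eq_of_bijective (phi s u v)
  refine ⟨?_, phi_surj s u v⟩
  intro C D hCD
  revert hCD
  refine C.ind fun x => D.ind fun y => fun hCD => ?_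
  rw [phi_mk, phi_mk] at hCD
  have hr := SimpleGraph.ConnectedComponent.eq.mp hCD
  rcases reach_insert hr with h1 | ⟨h1, h2⟩ | ⟨h1, h2⟩
  · exact SimpleGraph.ConnectedComponent.eq.mpr h1
  · exact SimpleGraph.ConnectedComponent.eq.mpr ((h1.trans h).trans h2)
  · exact SimpleGraph.ConnectedComponent.eq.mpr ((h1.trans h.symm).trans h2)

lemma kk_insert_lt_of_not_reach (hne : u ≠ v) (h : ¬ (Gsml s).Reachable u v) :
    kk (insert s(u,v) s) < kk s := by
  classical
  letI : Fintype (Gsml s).ConnectedComponent := Fintype.ofFinite _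
  letI : Fintype (Gbig s u v).ConnectedComponent := Fintype.ofFinite _
  rw [kk, kk, Nat.card_eq_fintype_card, Nat.card_eq_fintype_card]
  apply Fintype.card_lt_of_surjective_not_injective _ (phi_surj s u v)
  intro hinj
  apply h
  have hadj : (Gbig s u v).Adj u v :=
    (SimpleGraph.fromEdgeSet_adj _).mpr ⟨Set.mem_insert _ _, hne⟩
  have : phi s u v ((Gsml s).connectedComponentMk u) = phi s u v ((Gsml s).connectedComponentMk v) := by
    rw [phi_mk, phi_mk]
    exact SimpleGraph.ConnectedComponent.eq.mpr hadj.reachable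
  exact SimpleGraph.ConnectedComponent.eq.mp (hinj this)

end phi

lemma numComp_eq_kk (A : Finset (Sym2 V)) : numCompOfEdges A = kk (A : Set (Sym2 V)) := rfl

variable [DecidableEq V]

lemma coe_ins (e : Sym2 V) (A : Finset (Sym2 V)) :
    ((insert e A : Finset (Sym2 V)) : Set (Sym2 V)) = insert e (A : Set (Sym2 V)) := by
  simp

lemma k_insert_le (e : Sym2 V) (A : Finset (Sym2 V)) :
    numCompOfEdges (insert e A) ≤ numCompOfEdges A := by
  rw [numCompOfEdges, numCompOfEdges, coe_ins]
  exact kk_mono (Set.subset_insert _ _)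

lemma k_mono' {A B : Finset (Sym2 V)} (h : A ⊆ B) :
    numCompOfEdges B ≤ numCompOfEdges A := kk_mono (by exact_mod_cast h)

lemma k_le_insert (e : Sym2 V) (A : Finset (Sym2 V)) :
    numCompOfEdges A ≤ numCompOfEdges (insert e A) + 1 := by
  rw [numCompOfEdges, numCompOfEdges, coe_ins]
  induction e using Sym2.ind with
  | _ u v => exact kk_le_insert _ u v

lemma k_merge {e : Sym2 V} {A B : Finset (Sym2 V)} (hAB : A ⊆ B)
    (h : numCompOfEdges (insert e A) = numCompOfEdges A) :
    numCompOfEdges (insert e B) = numCompOfEdges B := by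
  rw [numCompOfEdges, coe_ins] at h ⊢
  induction e using Sym2.ind with
  | _ u v =>
    by_cases huv : u = v
    · subst huv; exact kk_insert_diag u _
    · have hreach : (Gsml (A : Set (Sym2 V))).Reachable u v := by
        by_contra hr
        exact absurd h (Nat.ne_of_lt (kk_insert_lt_of_not_reach _ u v huv hr))
      apply kk_insert_of_reach
      exact hreach.mono (fromEdgeSet_mono (by exact_mod_cast hAB))

lemma k_empty : numCompOfEdges (∅ : Finset (Sym2 V)) = Fintype.card V := by
  rw [numComp_eq_kk]
  simpa using kk_empty

lemma k_le_card (A : Finset (Sym2 V)) : numCompOfEdges A ≤ Fintype.card V :=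
  kk_le_card _

end Graph

section Abstract

variable {α : Type*} [DecidableEq α]

lemma r_union_mono (r : Finset α → ℕ)
    (h2 : ∀ (A : Finset α) (e : α), r A ≤ r (insert e A) ∧ r (insert e A) ≤ r A + 1) :
    ∀ (C A : Finset α), r A ≤ r (A ∪ C) := by
  intro C
  induction C using Finset.induction_on with
  | empty => intro A; simp
  | @insert f C hf ih =>
    intro A
    rw [Finset.union_insert]
    exact le_trans (ih A) (h2 (A ∪ C) f).1

lemma r_mono (r : Finset α → ℕ)
    (h2 : ∀ (A : Finset α) (e : α), r A ≤ r (insert e A) ∧ r (insert e A) ≤ r A + 1)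
    {A B : Finset α} (h : A ⊆ B) : r A ≤ r B := by
  have := r_union_mono r h2 B A
  rwa [Finset.union_eq_right.mpr h] at this

theorem abstract_nonneg (E : Finset α) :
    ∀ (r : Finset α → ℕ) (ℓ : ℕ),
      r ∅ = 0 →
      (∀ (A : Finset α) (e : α), r A ≤ r (insert e A) ∧ r (insert e A) ≤ r A + 1) →
      (∀ (A B : Finset α) (e : α), A ⊆ B → r (insert e B) = r B + 1 →
        r (insert e A) = r A + 1) →
      0 ≤ (-1 : ℝ) ^ (r E + ℓ) *
        ∑ A ∈ E.powerset, (-1 : ℝ) ^ A.card * ((r E - r A).choose ℓ : ℝ) := by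
  induction E using Finset.induction_on with
  | empty =>
    intro r ℓ h1 h2 h3
    rcases ℓ with _ | ℓ'
    · simp [h1]
    · simp [h1]
  | @insert e s he ih =>
    intro r ℓ h1 h2 h3
    have hmono : ∀ {A B : Finset α}, A ⊆ B → r A ≤ r B := fun h => r_mono r h2 h
    have hre : r {e} ≤ 1 := by
      have := (h2 ∅ e).2; rwa [h1] at this
    have hsub : ∀ A ∈ s.powerset, (insert e A).card = A.card + 1 := by
      intro A hA
      rw [Finset.mem_powerset] at hA
      exact Finset.card_insert_of_notMem (fun hc => he (hA hc))
    rw [Finset.sum_powerset_insert he]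
    rcases Nat.lt_or_ge (r {e}) 1 with hre0 | hre1
    · -- loop case : r {e} = 0, r (insert e A) = r A always
      have key : ∀ A : Finset α, r (insert e A) = r A := by
        intro A
        have hb := h2 A e
        by_contra hne
        have : r (insert e A) = r A + 1 := by omega
        have := h3 ∅ A e (Finset.empty_subset A) this
        rw [h1] at this
        have : r {e} = 1 := by
          rw [show ({e} : Finset α) = insert e ∅ by rfl]; omega
        omega
      have hsum2 : ∑ A ∈ s.powerset, (-1:ℝ) ^ (insert e A).card *
            ((r (insert e s) - r (insert e A)).choose ℓ : ℝ)
          = - ∑ A ∈ s.powerset, (-1:ℝ) ^ A.card * ((r (insert e s) - r A).choose ℓ : ℝ) := by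
        rw [← Finset.sum_neg_distrib]
        refine Finset.sum_congr rfl fun A hA => ?_
        rw [hsub A hA, key A, pow_succ]
        ring
      rw [hsum2]
      simp
    · -- r {e} = 1
      have hre1' : r {e} = 1 := le_antisymm hre hre1
      have hbound := h2 s e
      rcases Nat.lt_or_ge (r (insert e s)) (r s + 1) with hnb | hb
      · -- non-bridge : r (insert e s) = r s
        have hNs : r (insert e s) = r s := by omega
        -- contracted rank function
        set r' : Finset α → ℕ := fun A => r (insert e A) - 1 with hr'
        have hone : ∀ A : Finset α, 1 ≤ r (insert e A) := by
          intro A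
          calc 1 = r {e} := hre1'.symm
          _ ≤ r (insert e A) := hmono (by simp)
        have h1' : r' ∅ = 0 := by
          simp only [hr']
          rw [show (insert e ∅ : Finset α) = {e} by rfl, hre1']
        have h2' : ∀ (A : Finset α) (f : α), r' A ≤ r' (insert f A) ∧ r' (insert f A) ≤ r' A + 1 := by
          intro A f
          simp only [hr']
          rw [Finset.insert_comm]
          have := h2 (insert e A) f
          have := hone A
          omega
        have h3' : ∀ (A B : Finset α) (f : α), A ⊆ B → r' (insert f B) = r' B + 1 →
            r' (insert f A) = r' A + 1 := by
          intro A B f hAB hyp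
          simp only [hr'] at hyp ⊢
          rw [Finset.insert_comm] at hyp ⊢
          have hB := hone B
          have hA := hone A
          have : r (insert f (insert e B)) = r (insert e B) + 1 := by
            have := h2 (insert e B) f; omega
          have := h3 (insert e A) (insert e B) f (Finset.insert_subset_insert e hAB) this
          omega
        have ihr := ih r ℓ h1 h2 h3
        have ihr' := ih r' ℓ h1' h2' h3'
        have hr's : r' s = r (insert e s) - 1 := rfl
        -- rewrite second sum
        have hsum2 : ∑ A ∈ s.powerset, (-1:ℝ) ^ (insert e A).card *
              ((r (insert e s) - r (insert e A)).choose ℓ : ℝ)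
            = - ∑ A ∈ s.powerset, (-1:ℝ) ^ A.card * ((r' s - r' A).choose ℓ : ℝ) := by
          rw [← Finset.sum_neg_distrib]
          refine Finset.sum_congr rfl fun A hA => ?_
          rw [hsub A hA, pow_succ]
          have harg : r (insert e s) - r (insert e A) = r' s - r' A := by
            have h1A := hone A
            have h1s := hone s
            have hle : r (insert e A) ≤ r (insert e s) :=
              hmono (Finset.insert_subset_insert e (Finset.mem_powerset.mp hA))
            simp only [hr']
            omega
          rw [harg]
          ring
        rw [hsum2, hNs]
        obtain ⟨M, hM⟩ : ∃ M, r s = M + 1 := by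
          have := hone s; rw [hNs] at this; exact ⟨r s - 1, by omega⟩
        have hr'sM : r' s = M := by simp only [hr']; omega
        have hsign : (-1:ℝ) ^ (r s + ℓ) = -(-1:ℝ) ^ (r' s + ℓ) := by
          rw [hM, hr'sM, show M + 1 + ℓ = (M + ℓ) + 1 by ring, pow_succ]
          ring
        rw [hsign] at ihr ⊢
        nlinarith [ihr, ihr']
      · -- bridge : r (insert e s) = r s + 1
        have hNs : r (insert e s) = r s + 1 := by omega
        have key : ∀ A : Finset α, A ⊆ s → r (insert e A) = r A + 1 :=
          fun A hA => h3 A s e hA hNs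
        rcases ℓ with _ | ℓ'
        · -- ℓ = 0 : cancellation
          have hsum2 : ∑ A ∈ s.powerset, (-1:ℝ) ^ (insert e A).card *
                ((r (insert e s) - r (insert e A)).choose 0 : ℝ)
              = - ∑ A ∈ s.powerset, (-1:ℝ) ^ A.card * ((r (insert e s) - r A).choose 0 : ℝ) := by
            rw [← Finset.sum_neg_distrib]
            refine Finset.sum_congr rfl fun A hA => ?_
            rw [hsub A hA, pow_succ]
            simp [Nat.choose_zero_right]
          rw [hsum2]
          simp
        · -- ℓ = ℓ' + 1 : Pascal
          have ihr := ih r ℓ' h1 h2 h3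
          have hcomb : ∑ A ∈ s.powerset, (-1:ℝ) ^ A.card * ((r (insert e s) - r A).choose (ℓ'+1) : ℝ)
              + ∑ A ∈ s.powerset, (-1:ℝ) ^ (insert e A).card *
                  ((r (insert e s) - r (insert e A)).choose (ℓ'+1) : ℝ)
              = ∑ A ∈ s.powerset, (-1:ℝ) ^ A.card * ((r s - r A).choose ℓ' : ℝ) := by
            rw [← Finset.sum_add_distrib]
            refine Finset.sum_congr rfl fun A hA => ?_
            have hAs := Finset.mem_powerset.mp hA
            have hkey := key A hAs
            have hAle : r A ≤ r s := hmono hAs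
            have harg1 : r (insert e s) - r A = (r s - r A) + 1 := by omega
            have harg2 : r (insert e s) - r (insert e A) = r s - r A := by omega
            rw [hsub A hA, harg1, harg2, pow_succ, Nat.choose_succ_succ (r s - r A) ℓ']
            push_cast
            ring
          rw [hcomb, hNs]
          have hsign : (-1:ℝ) ^ (r s + 1 + (ℓ' + 1)) = (-1:ℝ) ^ (r s + ℓ') := by
            rw [show r s + 1 + (ℓ' + 1) = (r s + ℓ') + 2 by ring, pow_add]
            norm_num
          rw [hsign]
          exact ihr
end Abstract


section Poly

lemma iteratedDeriv_polyEval (p : Polynomial ℝ) (ℓ : ℕ) (x : ℝ) :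
    iteratedDeriv ℓ (fun y => p.eval y) x = (Polynomial.derivative^[ℓ] p).eval x := by
  induction ℓ generalizing p with
  | zero => simp
  | succ m ih =>
    rw [iteratedDeriv_succ', Function.iterate_succ_apply]
    have hd : deriv (fun y : ℝ => p.eval y) = fun y => (Polynomial.derivative p).eval y := by
      funext y; exact Polynomial.deriv (p := p)
    rw [hd, ih]

end Poly

end ChromPolyAux

open ChromPolyAux in
/-- Let `G` be a finite simple graph with `n` vertices and `c` components, and let
`P_G` be its chromatic polynomial.  Then for every `ℓ ≥ 0`,
`(-1)^{n-c-ℓ} (d^ℓ/dq^ℓ)(P_G(q)/q^c) |_{q=1} ≥ 0`. -/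
theorem chromPoly_derivatives_at_one {V : Type*} [Fintype V] [DecidableEq V]
    (G : SimpleGraph V) [DecidableRel G.Adj]
    (n c : ℕ) (hn : n = Fintype.card V) (hc : c = Nat.card G.ConnectedComponent)
    (ℓ : ℕ) :
    0 ≤ (-1 : ℝ) ^ ((n : ℤ) - c - ℓ) *
      iteratedDeriv ℓ (fun q : ℝ => chromPoly G q / q ^ c) 1 := by
  classical
  have hkE : numCompOfEdges G.edgeFinset = c := by
    rw [hc, numCompOfEdges, SimpleGraph.coe_edgeFinset, SimpleGraph.fromEdgeSet_edgeSet]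
  have hkn : ∀ A : Finset (Sym2 V), numCompOfEdges A ≤ n := fun A => hn ▸ k_le_card A
  have hck : ∀ A ∈ G.edgeFinset.powerset, c ≤ numCompOfEdges A := by
    intro A hA
    rw [← hkE]
    exact k_mono' (Finset.mem_powerset.mp hA)
  -- the polynomial
  set Q : Polynomial ℝ := ∑ A ∈ G.edgeFinset.powerset,
      Polynomial.C ((-1 : ℝ) ^ A.card) * Polynomial.X ^ (numCompOfEdges A - c) with hQ
  have hev : (fun q : ℝ => chromPoly G q / q ^ c) =ᶠ[nhds 1] fun q => Q.eval q := by
    filter_upwards [eventually_ne_nhds (one_ne_zero : (1:ℝ) ≠ 0)] with q hq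
    rw [chromPoly, Finset.sum_div, hQ, Polynomial.eval_finset_sum]
    refine Finset.sum_congr rfl fun A hA => ?_
    rw [Polynomial.eval_mul, Polynomial.eval_C, Polynomial.eval_pow, Polynomial.eval_X,
      mul_div_assoc, pow_sub₀ q hq (hck A hA), div_eq_mul_inv]
  rw [hev.iteratedDeriv_eq ℓ, iteratedDeriv_polyEval]
  -- compute the derivative
  have hDQ : (Polynomial.derivative^[ℓ] Q).eval 1
      = (ℓ.factorial : ℝ) * ∑ A ∈ G.edgeFinset.powerset,
          (-1 : ℝ) ^ A.card * (((numCompOfEdges A - c).choose ℓ : ℕ) : ℝ) := by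
    rw [hQ, Polynomial.iterate_derivative_sum, Polynomial.eval_finset_sum, Finset.mul_sum]
    refine Finset.sum_congr rfl fun A hA => ?_
    rw [Polynomial.iterate_derivative_C_mul, Polynomial.iterate_derivative_X_pow_eq_natCast_mul,
      Polynomial.eval_mul, Polynomial.eval_C, Polynomial.eval_mul, Polynomial.eval_natCast,
      Polynomial.eval_pow, Polynomial.eval_X, one_pow, mul_one,
      Nat.descFactorial_eq_factorial_mul_choose]
    push_cast
    ring
  rw [hDQ]
  -- the sign
  have hcn : c ≤ n := by rw [← hkE]; exact hkn _
  have hsign : (-1 : ℝ) ^ ((n : ℤ) - c - ℓ) = (-1 : ℝ) ^ ((n - c) + ℓ) := by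
    have hz : ((n : ℤ) - c - ℓ) = (((n - c) + ℓ : ℕ) : ℤ) - 2 * ℓ := by
      push_cast [hcn]
      ring
    rw [hz, zpow_sub₀ (by norm_num : (-1:ℝ) ≠ 0), zpow_natCast]
    have h2 : ((-1 : ℝ) ^ (2 * (ℓ:ℤ))) = 1 := by
      rw [zpow_mul]
      norm_num
    rw [h2]
    norm_num
  rw [hsign]
  -- apply the abstract theorem with the rank function
  have habs := abstract_nonneg G.edgeFinset (fun A => n - numCompOfEdges A) ℓ
    (by simp [k_empty, hn])
    (by
      intro A e
      try dsimp only
      have h1 := k_insert_le e A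
      have h2 := k_le_insert e A
      have h3 := hkn A
      constructor <;> omega)
    (by
      intro A B e hAB hyp
      try dsimp only at hyp ⊢
      have hA1 := k_insert_le e A
      have hA2 := k_le_insert e A
      have hB1 := k_insert_le e B
      have hB2 := k_le_insert e B
      have hnA := hkn A
      have hnB := hkn B
      have hnA' := hkn (insert e A)
      have hnB' := hkn (insert e B)
      by_contra hne
      have hAeq : numCompOfEdges (insert e A) = numCompOfEdges A := by omega
      have hBeq := k_merge hAB hAeq
      omega)
  try dsimp only at habs
  have hrE : n - numCompOfEdges G.edgeFinset = n - c := by rw [hkE]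
  -- identify the sums
  have hsums : ∑ A ∈ G.edgeFinset.powerset, (-1 : ℝ) ^ A.card *
        (((n - numCompOfEdges G.edgeFinset) - (n - numCompOfEdges A)).choose ℓ : ℝ)
      = ∑ A ∈ G.edgeFinset.powerset,
          (-1 : ℝ) ^ A.card * (((numCompOfEdges A - c).choose ℓ : ℕ) : ℝ) := by
    refine Finset.sum_congr rfl fun A hA => ?_
    have h1 := hck A hA
    have h2 := hkn A
    have harg : (n - numCompOfEdges G.edgeFinset) - (n - numCompOfEdges A)
        = numCompOfEdges A - c := by
      rw [hkE]; omega
    rw [harg]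
  rw [hsums, hrE] at habs
  have hfact : (0:ℝ) ≤ (ℓ.factorial : ℝ) := by positivity
  calc (0:ℝ) ≤ (ℓ.factorial : ℝ) * ((-1 : ℝ) ^ ((n - c) + ℓ) *
        ∑ A ∈ G.edgeFinset.powerset,
          (-1 : ℝ) ^ A.card * (((numCompOfEdges A - c).choose ℓ : ℕ) : ℝ)) :=
      mul_nonneg hfact habs
    _ = (-1 : ℝ) ^ ((n - c) + ℓ) * ((ℓ.factorial : ℝ) *
        ∑ A ∈ G.edgeFinset.powerset,
          (-1 : ℝ) ^ A.card * (((numCompOfEdges A - c).choose ℓ : ℕ) : ℝ)) := by ring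
end
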